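/- arXiv:2109.04445 — 7 statements merged into one kernel-verified Lean document; each statement's English description precedes it below -/
import Mathlib

section
/- Let G be a finite abelian group and let L ∈ ℤ^{1×d} be a matrix all of whose coefficients are coprime to |G|. If d is even and L admits a canceling partition in G, then L is fully Sidorenko in G; that is, for every function f : G → [0,1] one has t_L(f) ≥ (E(f))^d. -/
open Finset

variable {G : Type*} [AddCommGroup G] [Fintype G] [DecidableEq G]

/-- The configuration `C(L)` given by a matrix `L ∈ ℤ^{1×d}`: the kernel in `G^d` of the
induced map `v ↦ ∑ i, L 0 i • v i`. -/
def config {d : ℕ} (L : Matrix (Fin 1) (Fin d) ℤ) : Finset (Fin d → G) :=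
  Finset.univ.filter fun v => ∑ i, L 0 i • v i = 0

/-- The arithmetic multiplicity `t_L(f)`. -/
noncomputable def tL {d : ℕ} (L : Matrix (Fin 1) (Fin d) ℤ) (f : G → ℝ) : ℝ :=
  (∑ v ∈ config L, ∏ i, f (v i)) / ((config (G := G) L).card : ℝ)

/-- The average `E(f)` of `f` over `G`. -/
noncomputable def avg (f : G → ℝ) : ℝ := (∑ x, f x) / (Fintype.card G : ℝ)

/-- `L` admits a canceling partition in `G`: a partition of the index set into (distinct) pairs,
encoded by a fixed-point-free involution `σ`, such that for each pair `{i, σ i}` the pair of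
coefficients `(L 0 i, L 0 (σ i))` is canceling in `G`, i.e. their sum acts trivially on `G`. -/
def HasCancelingPartition (G : Type*) [AddCommGroup G] {d : ℕ}
    (L : Matrix (Fin 1) (Fin d) ℤ) : Prop :=
  ∃ σ : Equiv.Perm (Fin d), (∀ i, σ i ≠ i) ∧ (∀ i, σ (σ i) = i) ∧
    ∀ i, ∀ x : G, (L 0 i + L 0 (σ i)) • x = 0

private lemma exists_zsmul_eq {n : ℤ}
    (h : IsCoprime n (Fintype.card G : ℤ)) (t : G) : ∃ x : G, n • x = t := by
  obtain ⟨a, b, hab⟩ := h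
  refine ⟨a • t, ?_⟩
  have hcard : (Fintype.card G : ℤ) • t = 0 := by
    rw [natCast_zsmul]; exact card_nsmul_eq_zero
  calc n • a • t = (a * n) • t := by rw [← mul_smul, mul_comm]
    _ = (1 - b * (Fintype.card G : ℤ)) • t := by rw [eq_sub_of_add_eq hab]
    _ = t := by rw [sub_smul, one_smul, mul_smul, hcard, smul_zero, sub_zero]

private lemma card_config_mul {d : ℕ} (L : Matrix (Fin 1) (Fin d) ℤ) (i0 : Fin d)
    (hcop : IsCoprime (L 0 i0) (Fintype.card G : ℤ)) :
    Fintype.card G * (config (G := G) L).card = Fintype.card G ^ d := by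
  classical
  have key : ∀ t : G,
      ((univ : Finset (Fin d → G)).filter fun v => ∑ i, L 0 i • v i = t).card
        = (config (G := G) L).card := by
    intro t
    obtain ⟨x, hx⟩ := exists_zsmul_eq hcop t
    have hz : ∑ i, L 0 i • (Pi.single i0 x : Fin d → G) i = t := by
      rw [Finset.sum_eq_single i0]
      · rw [Pi.single_eq_same, hx]
      · intro b _ hb
        rw [Pi.single_eq_of_ne hb, smul_zero]
      · intro hb; exact absurd (mem_univ i0) hb
    apply Finset.card_nbij' (fun v => v - (Pi.single i0 x : Fin d → G)) (fun v => v + (Pi.single i0 x : Fin d → G))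
    · intro v hv
      simp only [mem_coe, mem_filter, mem_univ, true_and] at hv
      simp only [config, mem_coe, mem_filter, mem_univ, true_and]
      have : ∑ i, L 0 i • (v - (Pi.single i0 x : Fin d → G)) i
          = (∑ i, L 0 i • v i) - ∑ i, L 0 i • (Pi.single i0 x : Fin d → G) i := by
        rw [← Finset.sum_sub_distrib]
        refine Finset.sum_congr rfl fun i _ => ?_
        rw [Pi.sub_apply, smul_sub]
      rw [this, hv, hz, sub_self]
    · intro v hv
      simp only [config, mem_coe, mem_filter, mem_univ, true_and] at hv
      simp only [mem_coe, mem_filter, mem_univ, true_and]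
      have : ∑ i, L 0 i • (v + (Pi.single i0 x : Fin d → G)) i
          = (∑ i, L 0 i • v i) + ∑ i, L 0 i • (Pi.single i0 x : Fin d → G) i := by
        rw [← Finset.sum_add_distrib]
        refine Finset.sum_congr rfl fun i _ => ?_
        rw [Pi.add_apply, smul_add]
      rw [this, hv, hz, zero_add]
    · intro v _; simp
    · intro v _; simp
  have hfib := Finset.card_eq_sum_card_fiberwise
    (s := (univ : Finset (Fin d → G))) (t := (univ : Finset G))
    (f := fun v => ∑ i, L 0 i • v i) (fun x _ => mem_univ _)
  rw [Finset.card_univ, Fintype.card_fun, Fintype.card_fin] at hfib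
  simp only [key] at hfib
  rw [Finset.sum_const, Finset.card_univ, smul_eq_mul] at hfib
  exact hfib.symm

/-- If all coefficients of `L ∈ ℤ^{1×d}` are coprime to `|G|`, `d` is even and `L` admits a
canceling partition in `G`, then `L` is fully Sidorenko in `G`. -/
theorem single_equation_fully_sidorenko {d : ℕ} (L : Matrix (Fin 1) (Fin d) ℤ)
    (hcop : ∀ i, IsCoprime (L 0 i) (Fintype.card G : ℤ))
    (hd : Even d) (hpart : HasCancelingPartition G L)
    (f : G → ℝ) (hf : ∀ x, f x ∈ Set.Icc (0 : ℝ) 1) :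
    tL L f ≥ (avg f) ^ d := by
  classical
  obtain ⟨σ, hσ1, hσ2, hσ3⟩ := hpart
  rcases Nat.eq_zero_or_pos d with rfl | hd1
  · simp [tL, config, Finset.filter_true_of_mem]
  -- the two half index sets
  set p : Fin d → Prop := fun i => i < σ i with hp
  have hmem : ∀ i : Fin d, p i → ¬ p (σ i) := by
    intro i hi
    simp only [hp, hσ2]
    exact lt_asymm hi
  have hmem' : ∀ i : Fin d, ¬ p i → p (σ i) := by
    intro i hi
    simp only [hp, hσ2]
    exact (not_lt.mp hi).lt_of_ne (hσ1 i)
  let e : {i : Fin d // p i} ≃ {i : Fin d // ¬ p i} :=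
    { toFun := fun i => ⟨σ i, hmem i i.2⟩
      invFun := fun j => ⟨σ j, hmem' j j.2⟩
      left_inv := fun i => Subtype.ext (hσ2 i)
      right_inv := fun j => Subtype.ext (hσ2 j) }
  set k := Fintype.card {i : Fin d // p i} with hk
  have hcard2 : 2 * k = d := by
    have h1 : Fintype.card {i : Fin d // p i} = Fintype.card {i : Fin d // ¬ p i} :=
      Fintype.card_congr e
    have h2 := Fintype.card_congr (Equiv.sumCompl p)
    rw [Fintype.card_sum, Fintype.card_fin] at h2
    omega
  set c : ({i : Fin d // p i} → G) → G := fun w => ∑ i, L 0 i.1 • w i with hc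
  set P : ({i : Fin d // p i} → G) → ℝ := fun w => ∏ i, f (w i) with hP
  set h : G → ℝ := fun s => ∑ w, if c w = s then P w else 0 with hh
  have hcancel : ∀ (i : Fin d) (x : G), L 0 (σ i) • x = -(L 0 i • x) := by
    intro i x
    have := hσ3 i x
    rw [add_smul] at this
    exact eq_neg_of_add_eq_zero_right this
  -- Step A : the config sum equals ∑ s, h s * h s
  have lhs_eq : ∑ v ∈ config L, ∏ i, f (v i)
      = ∑ w : {i : Fin d // p i} → G, ∑ w' : {i : Fin d // p i} → G,
          if c w = c w' then P w * P w' else 0 := by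
    have e1 : ∑ v ∈ config L, ∏ i, f (v i)
        = ∑ v : Fin d → G, if (∑ i, L 0 i • v i) = 0 then ∏ i, f (v i) else 0 := by
      rw [config, Finset.sum_filter]
    rw [e1, ← Equiv.sum_comp (Equiv.piEquivPiSubtypeProd p (fun _ => G)).symm
        (fun v => if (∑ i, L 0 i • v i) = 0 then ∏ i, f (v i) else 0),
      Fintype.sum_prod_type]
    have glue : ∀ (w : {i : Fin d // p i} → G) (u : {i : Fin d // ¬ p i} → G),
        (if (∑ i, L 0 i • ((Equiv.piEquivPiSubtypeProd p (fun _ => G)).symm (w, u)) i) = 0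
          then ∏ i, f (((Equiv.piEquivPiSubtypeProd p (fun _ => G)).symm (w, u)) i) else 0)
        = (if c w + (∑ j : {i : Fin d // ¬ p i}, L 0 j.1 • u j) = 0
            then P w * ∏ j : {i : Fin d // ¬ p i}, f (u j) else 0) := by
      intro w u
      have hv1 : ∀ i : {i : Fin d // p i},
          ((Equiv.piEquivPiSubtypeProd p (fun _ => G)).symm (w, u)) i.1 = w i := by
        intro i
        simp [Equiv.piEquivPiSubtypeProd, i.2]
      have hv2 : ∀ j : {i : Fin d // ¬ p i},
          ((Equiv.piEquivPiSubtypeProd p (fun _ => G)).symm (w, u)) j.1 = u j := by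
        intro j
        simp [Equiv.piEquivPiSubtypeProd, j.2]
      have hsum : (∑ i, L 0 i • ((Equiv.piEquivPiSubtypeProd p (fun _ => G)).symm (w, u)) i)
          = c w + ∑ j : {i : Fin d // ¬ p i}, L 0 j.1 • u j := by
        rw [← Fintype.sum_subtype_add_sum_subtype p
          (fun i => L 0 i • ((Equiv.piEquivPiSubtypeProd p (fun _ => G)).symm (w, u)) i)]
        congr 1
        · exact Finset.sum_congr rfl fun i _ => by rw [hv1 i]
        · exact Finset.sum_congr rfl fun j _ => by rw [hv2 j]
      have hprod : (∏ i, f (((Equiv.piEquivPiSubtypeProd p (fun _ => G)).symm (w, u)) i))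
          = P w * ∏ j : {i : Fin d // ¬ p i}, f (u j) := by
        rw [← Fintype.prod_subtype_mul_prod_subtype p
          (fun i => f (((Equiv.piEquivPiSubtypeProd p (fun _ => G)).symm (w, u)) i))]
        congr 1
        · exact Finset.prod_congr rfl fun i _ => by rw [hv1 i]
        · exact Finset.prod_congr rfl fun j _ => by rw [hv2 j]
      rw [hsum, hprod]
    refine Finset.sum_congr rfl fun w _ => ?_
    rw [Finset.sum_congr rfl fun u _ => glue w u]
    -- reindex the inner sum by e
    rw [← Equiv.sum_comp (Equiv.arrowCongr e (Equiv.refl G))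
      (fun u => if c w + (∑ j : {i : Fin d // ¬ p i}, L 0 j.1 • u j) = 0
          then P w * ∏ j : {i : Fin d // ¬ p i}, f (u j) else 0)]
    refine Fintype.sum_congr _ _ fun w' => ?_
    have hu : ∀ j : {i : Fin d // ¬ p i},
        (Equiv.arrowCongr e (Equiv.refl G)) w' j = w' (e.symm j) := fun j => rfl
    have hcsum : (∑ j : {i : Fin d // ¬ p i},
        L 0 j.1 • ((Equiv.arrowCongr e (Equiv.refl G)) w') j) = - c w' := by
      rw [← Equiv.sum_comp e (fun j : {i : Fin d // ¬ p i} =>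
        L 0 j.1 • ((Equiv.arrowCongr e (Equiv.refl G)) w') j)]
      rw [hc, ← Finset.sum_neg_distrib]
      refine Finset.sum_congr rfl fun i _ => ?_
      rw [hu, Equiv.symm_apply_apply]
      exact hcancel i.1 (w' i)
    have hqprod : (∏ j : {i : Fin d // ¬ p i},
        f (((Equiv.arrowCongr e (Equiv.refl G)) w') j)) = P w' := by
      rw [← Equiv.prod_comp e (fun j : {i : Fin d // ¬ p i} =>
        f (((Equiv.arrowCongr e (Equiv.refl G)) w') j))]
      exact Finset.prod_congr rfl fun i _ => by rw [hu, Equiv.symm_apply_apply]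
    rw [hcsum, hqprod]
    simp only [add_neg_eq_zero]
  have inner : ∀ w w' : {i : Fin d // p i} → G,
      (∑ s : G, (if c w = s then P w else 0) * (if c w' = s then P w' else 0))
        = if c w = c w' then P w * P w' else 0 := by
    intro w w'
    rw [Finset.sum_eq_single_of_mem (c w) (mem_univ _)]
    · by_cases h2 : c w = c w' <;> simp [h2, eq_comm]
    · intro s _ hs
      rw [if_neg (fun hh => hs hh.symm), zero_mul]
  have rhs_eq : ∑ s : G, h s * h s
      = ∑ w : {i : Fin d // p i} → G, ∑ w' : {i : Fin d // p i} → G,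
          if c w = c w' then P w * P w' else 0 := by
    calc ∑ s : G, h s * h s
        = ∑ s : G, ∑ w : {i : Fin d // p i} → G, ∑ w' : {i : Fin d // p i} → G,
            (if c w = s then P w else 0) * (if c w' = s then P w' else 0) :=
          Finset.sum_congr rfl fun s _ => by rw [hh]; exact Finset.sum_mul_sum _ _ _ _
      _ = ∑ w : {i : Fin d // p i} → G, ∑ w' : {i : Fin d // p i} → G, ∑ s : G,
            (if c w = s then P w else 0) * (if c w' = s then P w' else 0) := by
          rw [Finset.sum_comm]
          exact Finset.sum_congr rfl fun w _ => Finset.sum_comm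
      _ = _ := Finset.sum_congr rfl fun w _ => Finset.sum_congr rfl fun w' _ => inner w w'
  have hS : ∑ v ∈ config L, ∏ i, f (v i) = ∑ s : G, h s * h s := by
    rw [lhs_eq, rhs_eq]
  -- Step B : total mass of h
  have hT : ∑ s : G, h s = (∑ x, f x) ^ k := by
    rw [hh]
    rw [Finset.sum_comm]
    have : ∀ w : {i : Fin d // p i} → G, (∑ s : G, if c w = s then P w else 0) = P w := by
      intro w
      rw [Finset.sum_ite_eq (univ : Finset G) (c w) (fun _ => P w), if_pos (mem_univ _)]
    rw [Finset.sum_congr rfl fun w _ => this w]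
    rw [hP]
    rw [← Fintype.piFinset_univ, ← Finset.prod_univ_sum]
    rw [Finset.prod_const, Finset.card_univ, hk]
  -- Step C : cardinality of the configuration
  have hNc : Fintype.card G * (config (G := G) L).card = Fintype.card G ^ d :=
    card_config_mul L ⟨0, hd1⟩ (hcop _)
  have hne : (0 : Fin d → G) ∈ config (G := G) L := by
    simp [config]
  have hNcpos : (0 : ℝ) < ((config (G := G) L).card : ℝ) := by
    have := Finset.card_pos.mpr ⟨_, hne⟩
    exact_mod_cast this
  have hCGpos : (0 : ℝ) < (Fintype.card G : ℝ) := by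
    have := Fintype.card_pos (α := G)
    exact_mod_cast this
  -- Cauchy–Schwarz
  have hCS : (∑ s : G, h s) ^ 2 ≤ (Fintype.card G : ℝ) * ∑ s : G, h s * h s := by
    have := sq_sum_le_card_mul_sum_sq (s := (univ : Finset G)) (f := h)
    simpa [Finset.card_univ, sq] using this
  have key : (∑ x, f x) ^ d ≤ (Fintype.card G : ℝ) * ∑ v ∈ config L, ∏ i, f (v i) := by
    have hpow : (∑ x, f x) ^ d = ((∑ x, f x) ^ k) ^ 2 := by
      rw [← pow_mul, mul_comm, hcard2]
    rw [hS, hpow, ← hT]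
    exact hCS
  have hNcR : (Fintype.card G : ℝ) * ((config (G := G) L).card : ℝ)
      = (Fintype.card G : ℝ) ^ d := by exact_mod_cast hNc
  rw [ge_iff_le, tL, avg, div_pow, div_le_div_iff₀ (by positivity) hNcpos]
  calc (∑ x, f x) ^ d * ((config (G := G) L).card : ℝ)
      ≤ ((Fintype.card G : ℝ) * ∑ v ∈ config L, ∏ i, f (v i))
          * ((config (G := G) L).card : ℝ) :=
        mul_le_mul_of_nonneg_right key (le_of_lt hNcpos)
    _ = (∑ v ∈ config L, ∏ i, f (v i))
          * ((Fintype.card G : ℝ) * ((config (G := G) L).card : ℝ)) := by ring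
    _ = (∑ v ∈ config L, ∏ i, f (v i)) * (Fintype.card G : ℝ) ^ d := by rw [hNcR]
end

section
/- Let G be a finite abelian group and let L ∈ ℤ^{1×d} be a matrix all of whose coefficients are coprime to |G|. If d is odd, then L is fully common in G; that is, for every function f : G → [0,1] one has t_L(f) + t_L(1−f) ≥ (1/2)^{d−1}. -/
open Finset

variable {G : Type*} [AddCommGroup G] [Fintype G] [DecidableEq G]

lemma smul_bijective_of_coprime {a : ℤ} (h : IsCoprime a (Fintype.card G : ℤ)) :
    Function.Bijective (fun x : G => a • x) := by
  have hn : ∀ z : G, (Fintype.card G : ℤ) • z = 0 := fun z => by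
    rw [natCast_zsmul]; exact card_nsmul_eq_zero
  obtain ⟨u, v, huv⟩ := h
  have h1 : ∀ z : G, (u * a) • z = z := fun z => by
    have h2 : (v * (Fintype.card G : ℤ)) • z = 0 := by rw [mul_smul, hn z, smul_zero]
    calc (u * a) • z = (u * a) • z + (v * (Fintype.card G : ℤ)) • z := by rw [h2, add_zero]
      _ = (u * a + v * (Fintype.card G : ℤ)) • z := (add_smul _ _ _).symm
      _ = z := by rw [huv, one_smul]
  refine Finite.injective_iff_bijective.mp ?_
  intro x y hxy
  simp only at hxy
  calc x = (u * a) • x := (h1 x).symm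
    _ = u • a • x := mul_smul _ _ _
    _ = u • a • y := by rw [hxy]
    _ = (u * a) • y := (mul_smul _ _ _).symm
    _ = y := h1 y

lemma config_sum_prod {d : ℕ} (L : Matrix (Fin 1) (Fin d) ℤ)
    (hcop : ∀ i, IsCoprime (L 0 i) (Fintype.card G : ℤ))
    {S : Finset (Fin d)} (hS : S ≠ Finset.univ) (g : G → ℝ) :
    ∑ v ∈ config (G := G) L, ∏ i ∈ S, g (v i)
      = (∑ x, g x) ^ S.card * (Fintype.card G : ℝ) ^ (d - 1 - S.card) := by
  classical
  obtain ⟨j, hj⟩ : ∃ j, j ∉ S := by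
    by_contra h
    push_neg at h
    exact hS (Finset.eq_univ_iff_forall.mpr h)
  have hb : Function.Bijective (fun x : G => L 0 j • x) := smul_bijective_of_coprime (hcop j)
  set e : G ≃ G := Equiv.ofBijective _ hb with he
  set W' : ({i : Fin d // i ≠ j} → G) → Fin d → G :=
    fun w i => if h : i = j then 0 else w ⟨i, h⟩ with hW'
  have happ : ∀ (x : G) (w : {i : Fin d // i ≠ j} → G) (i : Fin d) (h : i ≠ j),
      (Equiv.funSplitAt j G).symm (x, w) i = w ⟨i, h⟩ := by
    intro x w i h
    simp [Equiv.funSplitAt, Equiv.piSplitAt, dif_neg h]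
  have happj : ∀ (x : G) (w : {i : Fin d // i ≠ j} → G),
      (Equiv.funSplitAt j G).symm (x, w) j = x := by
    intro x w
    simp [Equiv.funSplitAt, Equiv.piSplitAt]
  have step1 : ∑ v ∈ config (G := G) L, ∏ i ∈ S, g (v i)
      = ∑ v : Fin d → G, if ∑ i, L 0 i • v i = 0 then ∏ i ∈ S, g (v i) else 0 := by
    rw [config, Finset.sum_filter]
  rw [step1,
    ← Equiv.sum_comp (Equiv.funSplitAt j G).symm
      (fun v => if ∑ i, L 0 i • v i = 0 then ∏ i ∈ S, g (v i) else 0),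
    Fintype.sum_prod_type, Finset.sum_comm]
  have inner : ∀ w : {i : Fin d // i ≠ j} → G,
      (∑ x : G, if ∑ i, L 0 i • ((Equiv.funSplitAt j G).symm (x, w)) i = 0
        then ∏ i ∈ S, g (((Equiv.funSplitAt j G).symm (x, w)) i) else 0)
      = ∏ i ∈ S, g (W' w i) := by
    intro w
    set c : G := ∑ i' : {i : Fin d // i ≠ j}, L 0 (i' : Fin d) • w i' with hc
    have hprod : ∀ x : G,
        ∏ i ∈ S, g (((Equiv.funSplitAt j G).symm (x, w)) i) = ∏ i ∈ S, g (W' w i) := by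
      intro x
      refine Finset.prod_congr rfl fun i hi => ?_
      have hne : i ≠ j := ne_of_mem_of_not_mem hi hj
      rw [happ x w i hne, hW']
      simp [dif_neg hne]
    have hcond : ∀ x : G,
        (∑ i, L 0 i • ((Equiv.funSplitAt j G).symm (x, w)) i = 0) ↔ x = e.symm (-c) := by
      intro x
      rw [Fintype.sum_eq_add_sum_compl j, happj x w]
      have h2 : ∑ i ∈ ({j}ᶜ : Finset (Fin d)), L 0 i • ((Equiv.funSplitAt j G).symm (x, w)) i
          = c := by
        rw [Finset.sum_subtype (p := fun i => i ≠ j) ({j}ᶜ : Finset (Fin d)) (by simp)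
          (fun i => L 0 i • ((Equiv.funSplitAt j G).symm (x, w)) i)]
        exact Finset.sum_congr rfl fun i' _ => by rw [happ x w i' i'.2]
      rw [h2, Equiv.eq_symm_apply, he]
      simp only [Equiv.ofBijective_apply]
      constructor
      · intro h; rw [eq_neg_iff_add_eq_zero]; exact h
      · intro h; rw [eq_neg_iff_add_eq_zero] at h; exact h
    calc (∑ x : G, if ∑ i, L 0 i • ((Equiv.funSplitAt j G).symm (x, w)) i = 0
          then ∏ i ∈ S, g (((Equiv.funSplitAt j G).symm (x, w)) i) else 0)
        = ∑ x : G, (if x = e.symm (-c) then ∏ i ∈ S, g (W' w i) else 0) :=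
          Finset.sum_congr rfl fun x _ => if_congr (hcond x) (hprod x) rfl
      _ = ∏ i ∈ S, g (W' w i) := by simp
  rw [Finset.sum_congr rfl fun w _ => inner w]
  -- now compute ∑ w, ∏ i ∈ S, g (W' w i)
  have stepA : ∀ w : {i : Fin d // i ≠ j} → G,
      ∏ i ∈ S, g (W' w i)
        = ∏ i' : {i : Fin d // i ≠ j}, (if (i' : Fin d) ∈ S then g (w i') else 1) := by
    intro w
    rw [← Finset.prod_filter]
    refine Finset.prod_bij (fun i hi => (⟨i, ne_of_mem_of_not_mem hi hj⟩ : {i : Fin d // i ≠ j}))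
      ?_ ?_ ?_ ?_
    · intro i hi; simp [hi]
    · intro i hi i2 hi2 h
      simpa using congrArg Subtype.val h
    · intro i' hi'
      simp only [Finset.mem_filter, Finset.mem_univ, true_and] at hi'
      exact ⟨(i' : Fin d), hi', rfl⟩
    · intro i hi
      have hne : i ≠ j := ne_of_mem_of_not_mem hi hj
      rw [hW']
      simp [dif_neg hne]
  rw [Finset.sum_congr rfl fun w _ => stepA w,
    ← Fintype.prod_sum (fun (i' : {i : Fin d // i ≠ j}) (x : G) =>
      if (i' : Fin d) ∈ S then g x else 1)]
  have stepC : ∀ i' : {i : Fin d // i ≠ j},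
      (∑ x : G, if (i' : Fin d) ∈ S then g x else 1)
        = if (i' : Fin d) ∈ S then (∑ x, g x) else (Fintype.card G : ℝ) := by
    intro i'
    split_ifs <;> simp
  rw [Finset.prod_congr rfl fun i' _ => stepC i', Finset.prod_ite, Finset.prod_const,
    Finset.prod_const]
  have hsub : Fintype.card {i : Fin d // i ≠ j} = d - 1 := by
    rw [Fintype.card_subtype]
    rw [show (Finset.univ.filter fun x : Fin d => x ≠ j) = Finset.univ.erase j from
      Finset.filter_ne' _ _]
    rw [Finset.card_erase_of_mem (Finset.mem_univ j), Finset.card_univ, Fintype.card_fin]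
  have hk1 : (Finset.univ.filter fun i' : {i : Fin d // i ≠ j} => (i' : Fin d) ∈ S).card
      = S.card := by
    refine Finset.card_bij (fun i' _ => (i' : Fin d)) ?_ ?_ ?_
    · intro i' hi'
      simp only [Finset.mem_filter, Finset.mem_univ, true_and] at hi'
      exact hi'
    · intro i1 h1 i2 h2 h
      exact Subtype.ext h
    · intro i hi
      exact ⟨⟨i, ne_of_mem_of_not_mem hi hj⟩, by simp [hi], rfl⟩
  have hk2 : (Finset.univ.filter fun i' : {i : Fin d // i ≠ j} => ¬ (i' : Fin d) ∈ S).card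
      = d - 1 - S.card := by
    have h := Finset.card_filter_add_card_filter_not
      (s := (Finset.univ : Finset {i : Fin d // i ≠ j}))
      (p := fun i' => (i' : Fin d) ∈ S)
    rw [Finset.card_univ, hsub, hk1] at h
    omega
  rw [hk1, hk2]

/-- If all coefficients of `L ∈ ℤ^{1×d}` are coprime to `|G|` and `d` is odd, then `L` is fully
common in `G`. -/
theorem single_equation_odd_fully_common {d : ℕ} (L : Matrix (Fin 1) (Fin d) ℤ)
    (hcop : ∀ i, IsCoprime (L 0 i) (Fintype.card G : ℤ))
    (hd : Odd d)
    (f : G → ℝ) (hf : ∀ x, f x ∈ Set.Icc (0 : ℝ) 1) :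
    tL L f + tL L (fun x => 1 - f x) ≥ (1 / 2 : ℝ) ^ (d - 1) := by
  classical
  have hd1 : 1 ≤ d := hd.pos
  have hn0 : (0:ℝ) < (Fintype.card G : ℝ) := by exact_mod_cast Fintype.card_pos
  obtain ⟨g, hg⟩ : ∃ g : G → ℝ, ∀ x, g x = 2 * f x - 1 := ⟨_, fun _ => rfl⟩
  obtain ⟨a, ha⟩ : ∃ a : ℝ, a = (∑ x, g x) / (Fintype.card G : ℝ) := ⟨_, rfl⟩
  have hsum : (∑ x, g x) = a * (Fintype.card G : ℝ) := by
    rw [ha]; field_simp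
  have key : ∀ S : Finset (Fin d), S ≠ Finset.univ →
      ∑ v ∈ config (G := G) L, ∏ i ∈ S, g (v i)
        = a ^ S.card * (Fintype.card G : ℝ) ^ (d - 1) := by
    intro S hS
    have hk : S.card ≤ d - 1 := by
      have h1 : S.card < d := by
        have := Finset.card_lt_card (Finset.ssubset_univ_iff.mpr hS)
        simpa using this
      omega
    rw [config_sum_prod L hcop hS g, hsum, mul_pow, mul_assoc, ← pow_add]
    congr 2
    omega
  haveI : Nonempty (Fin d) := ⟨⟨0, by omega⟩⟩
  have hcard : ((config (G := G) L).card : ℝ) = (Fintype.card G : ℝ) ^ (d - 1) := by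
    have h := key ∅ (Ne.symm Finset.univ_nonempty.ne_empty)
    simpa using h
  have point : ∀ v : Fin d → G,
      (∏ i, f (v i)) + (∏ i, (1 - f (v i)))
        = (1/2 : ℝ) ^ d * ∑ T : Finset (Fin d), (1 + (-1 : ℝ) ^ T.card) * ∏ i ∈ T, g (v i) := by
    intro v
    have hf1 : ∀ x : G, f x = (g x + 1) * (1/2 : ℝ) := fun x => by rw [hg x]; ring
    have hf2 : ∀ x : G, 1 - f x = (-(g x) + 1) * (1/2 : ℝ) := fun x => by rw [hg x]; ring
    have hneg : ∀ t : Finset (Fin d),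
        ∏ i ∈ t, (-(g (v i))) = (-1:ℝ)^t.card * ∏ i ∈ t, g (v i) := fun t => by
      rw [← Finset.prod_const, ← Finset.prod_mul_distrib]
      simp
    calc (∏ i, f (v i)) + (∏ i, (1 - f (v i)))
        = (∏ i, ((g (v i) + 1) * (1/2 : ℝ))) + (∏ i, ((-(g (v i)) + 1) * (1/2 : ℝ))) := by
          rw [Finset.prod_congr rfl fun i _ => hf1 (v i),
            Finset.prod_congr rfl fun i _ => hf2 (v i)]
      _ = (1/2:ℝ)^d * (∏ i, (g (v i) + 1)) + (1/2:ℝ)^d * (∏ i, (-(g (v i)) + 1)) := by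
          rw [Finset.prod_mul_distrib, Finset.prod_mul_distrib, Finset.prod_const,
            Finset.card_univ, Fintype.card_fin]
          ring
      _ = (1/2:ℝ)^d * ((∑ T : Finset (Fin d), ∏ i ∈ T, g (v i))
            + ∑ T : Finset (Fin d), (-1:ℝ)^T.card * ∏ i ∈ T, g (v i)) := by
          rw [Fintype.prod_add, Fintype.prod_add]
          simp only [Finset.prod_const_one, mul_one]
          rw [Finset.sum_congr rfl fun T _ => hneg T]
          ring
      _ = (1/2:ℝ)^d * ∑ T : Finset (Fin d), (1 + (-1:ℝ)^T.card) * ∏ i ∈ T, g (v i) := by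
          rw [← Finset.sum_add_distrib]
          congr 1
          exact Finset.sum_congr rfl fun T _ => by ring
  have hbin : ∀ b : ℝ, ∑ T : Finset (Fin d), b ^ T.card = (b + 1)^d := by
    intro b
    have h := Fintype.prod_add (fun _ : Fin d => b) (fun _ => (1:ℝ))
    simp only [Finset.prod_const, Finset.prod_const_one, one_pow, mul_one, Finset.card_univ,
      Fintype.card_fin] at h
    exact h.symm
  have hTv : ∀ T : Finset (Fin d),
      ∑ v ∈ config (G := G) L, (1 + (-1:ℝ)^T.card) * ∏ i ∈ T, g (v i)
        = (1 + (-1:ℝ)^T.card) * (a ^ T.card * (Fintype.card G : ℝ)^(d-1)) := by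
    intro T
    rw [← Finset.mul_sum]
    by_cases hT : Even T.card
    · congr 1
      apply key
      intro hTu
      rw [hTu, Finset.card_univ, Fintype.card_fin] at hT
      exact (Nat.not_even_iff_odd.mpr hd) hT
    · have h1 : (-1:ℝ)^T.card = -1 := (Nat.not_even_iff_odd.mp hT).neg_one_pow
      rw [h1]
      ring
  have main : (∑ v ∈ config (G := G) L, ∏ i, f (v i))
      + (∑ v ∈ config (G := G) L, ∏ i, (1 - f (v i)))
      = (1/2:ℝ)^d * (((1+a)^d + (1-a)^d) * (Fintype.card G : ℝ) ^ (d-1)) := by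
    rw [← Finset.sum_add_distrib, Finset.sum_congr rfl fun v _ => point v, ← Finset.mul_sum]
    congr 1
    rw [Finset.sum_comm, Finset.sum_congr rfl fun T _ => hTv T]
    have step : ∀ T : Finset (Fin d),
        (1 + (-1:ℝ)^T.card) * (a ^ T.card * (Fintype.card G : ℝ)^(d-1))
          = (a ^ T.card + (-a) ^ T.card) * (Fintype.card G : ℝ)^(d-1) := by
      intro T
      rw [neg_pow]
      ring
    rw [Finset.sum_congr rfl fun T _ => step T, ← Finset.sum_mul, Finset.sum_add_distrib,
      hbin a, hbin (-a)]
    ring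
  have hEq : tL L f + tL L (fun x => 1 - f x)
      = (1/2:ℝ)^d * ((1+a)^d + (1-a)^d) := by
    rw [tL, tL, ← add_div, main, hcard,
      mul_div_assoc, mul_div_assoc, div_self (by positivity : ((Fintype.card G : ℝ) ^ (d-1)) ≠ 0),
      mul_one]
  rw [ge_iff_le, hEq]
  have hga : ∀ x, -1 ≤ g x ∧ g x ≤ 1 := fun x =>
    ⟨by have := (hf x).1; rw [hg x]; linarith,
     by have := (hf x).2; rw [hg x]; linarith⟩
  have haub : a ≤ 1 := by
    rw [ha, div_le_one hn0]
    calc ∑ x, g x ≤ ∑ _x : G, (1:ℝ) := Finset.sum_le_sum fun x _ => (hga x).2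
      _ = (Fintype.card G : ℝ) := by simp
  have halb : -1 ≤ a := by
    rw [ha, le_div_iff₀ hn0]
    calc (-1) * (Fintype.card G : ℝ) = ∑ _x : G, (-1:ℝ) := by simp
      _ ≤ ∑ x, g x := Finset.sum_le_sum fun x _ => (hga x).1
  have hconv : (2:ℝ) ≤ (1+a)^d + (1-a)^d := by
    have h := (convexOn_pow d).2 (Set.mem_Ici.mpr (by linarith : (0:ℝ) ≤ 1+a))
      (Set.mem_Ici.mpr (by linarith : (0:ℝ) ≤ 1-a)) (by norm_num : (0:ℝ) ≤ 1/2)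
      (by norm_num : (0:ℝ) ≤ 1/2) (by norm_num : (1/2:ℝ) + 1/2 = 1)
    simp only [smul_eq_mul] at h
    have h1 : (1/2:ℝ) * (1+a) + (1/2) * (1-a) = 1 := by ring
    rw [h1, one_pow] at h
    linarith
  have hdd : (1/2:ℝ)^d * 2 = (1/2:ℝ)^(d-1) := by
    conv_lhs => rw [show d = (d-1)+1 by omega, pow_succ]
    ring
  rw [← hdd]
  have h2 : (0:ℝ) ≤ (1/2:ℝ)^d := by positivity
  exact mul_le_mul_of_nonneg_left hconv h2
end

section
/- Let G be a finite abelian group with |G| > 1 and let L ∈ ℤ^{1×d} be a matrix all of whose coefficients are coprime to |G|. If d is odd, then L is not fully Sidorenko in G; that is, there exists a function f : G → [0,1] with t_L(f) < (E(f))^d. -/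
set_option linter.unusedSectionVars false


open Finset

variable {G : Type*} [AddCommGroup G] [Fintype G] [DecidableEq G]

section Aux

variable {A : Type*} [AddCommGroup A] [Fintype A] [DecidableEq A]

lemma aux_smul_surj {c : ℤ} (hc : IsCoprime c (Fintype.card A : ℤ)) (t : A) :
    ∃ x : A, c • x = t := by
  obtain ⟨u, v, huv⟩ := hc
  refine ⟨u • t, ?_⟩
  have h0 : (Fintype.card A : ℤ) • t = 0 := by
    have : Fintype.card A • t = 0 := card_nsmul_eq_zero
    rw [← natCast_zsmul] at this
    exact this
  have h1 : (c * u) • t = t := by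
    have hcu : c * u = 1 - v * (Fintype.card A : ℤ) := by linarith [huv]
    rw [hcu, sub_smul, one_smul, mul_smul, h0, smul_zero, sub_zero]
  rw [← mul_smul, h1]

lemma sum_smul_update {d : ℕ} (c : Fin d → ℤ) (v : Fin d → A) (j : Fin d) (w : A) :
    ∑ i, c i • Function.update v j w i = (∑ i, c i • v i) + c j • (w - v j) := by
  have h : ∀ i, c i • Function.update v j w i
      = Function.update (fun i => c i • v i) j (c j • w) i := by
    intro i
    rcases eq_or_ne i j with rfl | hij
    · simp
    · simp [Function.update_of_ne hij]
  rw [Finset.sum_congr rfl fun i _ => h i]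
  rw [Finset.sum_update_of_mem (Finset.mem_univ j)]
  rw [Finset.sum_eq_add_sum_sdiff_singleton_of_mem (Finset.mem_univ j) (fun i => c i • v i)]
  rw [smul_sub]
  abel

lemma fiber_sum {d : ℕ} (c : Fin d → ℤ) (j : Fin d)
    (hcj : IsCoprime (c j) (Fintype.card A : ℤ))
    (F : (Fin d → A) → ℝ)
    (hF : ∀ v z, F (Function.update v j z) = F v) :
    (∑ v ∈ univ.filter (fun v : Fin d → A => ∑ i, c i • v i = 0), F v) * (Fintype.card A : ℝ)
      = ∑ v : Fin d → A, F v := by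
  have hfib : ∀ t : A,
      ∑ v ∈ univ.filter (fun v : Fin d → A => ∑ i, c i • v i = t), F v
        = ∑ v ∈ univ.filter (fun v : Fin d → A => ∑ i, c i • v i = 0), F v := by
    intro t
    obtain ⟨z, hz⟩ := aux_smul_surj hcj t
    refine Finset.sum_nbij' (fun v => Function.update v j (v j - z))
      (fun v => Function.update v j (v j + z)) ?_ ?_ ?_ ?_ ?_
    · intro v hv
      simp only [Finset.mem_filter, Finset.mem_univ, true_and] at hv ⊢
      rw [sum_smul_update, hv, sub_sub_cancel_left, smul_neg, hz]
      abel
    · intro v hv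
      simp only [Finset.mem_filter, Finset.mem_univ, true_and] at hv ⊢
      rw [sum_smul_update, hv, add_sub_cancel_left, hz]
      abel
    · intro v _
      simp [Function.update_idem]
    · intro v _
      simp [Function.update_idem]
    · intro v _
      exact (hF v _).symm
  have hfw := Finset.sum_fiberwise (univ : Finset (Fin d → A)) (fun v => ∑ i, c i • v i) F
  rw [← hfw]
  rw [Finset.sum_congr rfl fun t _ => hfib t, Finset.sum_const, Finset.card_univ,
    nsmul_eq_mul, mul_comm]

lemma key_sum {d : ℕ} {c : Fin d → ℤ}
    (hc : ∀ i, IsCoprime (c i) (Fintype.card A : ℤ))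
    {S : Finset (Fin d)} (hS : S ≠ univ) (h : A → ℝ) :
    ∑ v ∈ univ.filter (fun v : Fin d → A => ∑ i, c i • v i = 0), ∏ i ∈ S, h (v i)
      = (Fintype.card A : ℝ) ^ (d - S.card - 1) * (∑ x, h x) ^ S.card := by
  obtain ⟨j, hj⟩ : ∃ j, j ∉ S := by
    by_contra hcon
    push_neg at hcon
    exact hS (Finset.eq_univ_iff_forall.2 hcon)
  have hF : ∀ (v : Fin d → A) (z : A),
      (∏ i ∈ S, h (Function.update v j z i)) = ∏ i ∈ S, h (v i) := by
    intro v z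
    refine Finset.prod_congr rfl fun i hi => ?_
    rw [Function.update_of_ne (ne_of_mem_of_not_mem hi hj)]
  have hfs := fiber_sum c j (hc j) (fun v => ∏ i ∈ S, h (v i)) hF
  have hcard : S.card < d := by
    have := Finset.card_lt_card (Finset.ssubset_univ_iff.2 hS)
    simpa using this
  have hfull : ∑ v : Fin d → A, ∏ i ∈ S, h (v i)
      = (∑ x, h x) ^ S.card * (Fintype.card A : ℝ) ^ (d - S.card) := by
    have h1 : ∀ v : Fin d → A, (∏ i ∈ S, h (v i))
        = ∏ i, (if i ∈ S then h (v i) else 1) := by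
      intro v
      rw [Finset.prod_ite_mem, Finset.univ_inter]
    rw [Finset.sum_congr rfl fun v _ => h1 v]
    have h2 : ∑ v : Fin d → A, ∏ i, (if i ∈ S then h (v i) else 1)
        = ∏ i, (∑ x : A, if i ∈ S then h x else 1) := by
      rw [Finset.prod_univ_sum]
      rw [← Fintype.piFinset_univ]
    rw [h2]
    have h3 : ∀ i : Fin d, (∑ x : A, if i ∈ S then h x else 1)
        = if i ∈ S then (∑ x, h x) else (Fintype.card A : ℝ) := by
      intro i
      split_ifs <;> simp
    rw [Finset.prod_congr rfl fun i _ => h3 i, Finset.prod_ite, Finset.prod_const,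
      Finset.prod_const]
    have hfil : Finset.univ.filter (fun i => i ∈ S) = S := by
      rw [Finset.filter_mem_eq_inter, Finset.univ_inter]
    congr 2
    · rw [hfil]
    · rw [Finset.filter_not, Finset.card_sdiff_of_subset (Finset.filter_subset _ _), Finset.card_univ,
        hfil]
      simp
  have hA0 : (0:ℝ) < (Fintype.card A : ℝ) := by exact_mod_cast Fintype.card_pos
  have hpow : (Fintype.card A : ℝ) ^ (d - S.card)
      = (Fintype.card A : ℝ) ^ (d - S.card - 1) * (Fintype.card A : ℝ) := by
    rw [← pow_succ]
    congr 1
    omega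
  rw [hfull, hpow, ← mul_assoc] at hfs
  have := mul_right_cancel₀ (ne_of_gt hA0) hfs
  rw [this]
  ring

end Aux

/-- If `|G| > 1`, all coefficients of `L ∈ ℤ^{1×d}` are coprime to `|G|` and `d` is odd, then `L`
is not fully Sidorenko in `G`. -/
theorem single_equation_odd_not_fully_sidorenko {d : ℕ} (L : Matrix (Fin 1) (Fin d) ℤ)
    (hG : 1 < Fintype.card G)
    (hcop : ∀ i, IsCoprime (L 0 i) (Fintype.card G : ℤ))
    (hd : Odd d) :
    ∃ f : G → ℝ, (∀ x, f x ∈ Set.Icc (0 : ℝ) 1) ∧ tL L f < (avg f) ^ d := by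
  classical
  have hd1 : 0 < d := hd.pos
  haveI : Nonempty (Fin d) := ⟨⟨0, hd1⟩⟩
  set n := Fintype.card G with hn
  set p := n.minFac with hpdef
  have hp : p.Prime := Nat.minFac_prime (by omega)
  haveI : Fact p.Prime := ⟨hp⟩
  haveI : NeZero p := ⟨hp.pos.ne'⟩
  have hpn : p ∣ n := Nat.minFac_dvd n
  obtain ⟨a, ha⟩ := exists_prime_addOrderOf_dvd_card (G := G) p hpn
  have hpa : zmultiplesHom G a (p : ℤ) = 0 := by
    have h1 : p • a = 0 := by rw [← ha]; exact addOrderOf_nsmul_eq_zero a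
    rw [zmultiplesHom_apply, natCast_zsmul]
    exact h1
  set ι : ZMod p →+ G := ZMod.lift p ⟨zmultiplesHom G a, hpa⟩ with hιdef
  have hι_inj : Function.Injective ι := by
    rw [hιdef, ZMod.lift_injective]
    intro m hm
    rw [zmultiplesHom_apply] at hm
    have hdvd : (addOrderOf a : ℤ) ∣ m := addOrderOf_dvd_iff_zsmul_eq_zero.2 hm
    rw [ha] at hdvd
    exact (ZMod.intCast_zmod_eq_zero_iff_dvd m p).2 hdvd
  set H : Finset G := Finset.image ι Finset.univ with hHdef
  have h0H : (0 : G) ∈ H := by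
    rw [hHdef]
    exact Finset.mem_image.2 ⟨0, Finset.mem_univ _, map_zero ι⟩
  have hcardH : H.card = p := by
    rw [hHdef, Finset.card_image_of_injective _ hι_inj, Finset.card_univ, ZMod.card]
  set g : G → ℝ := fun x => (p:ℝ) * (if x = 0 then 1 else 0) - (if x ∈ H then 1 else 0)
    with hgdef
  have hg_sum : ∑ x, g x = 0 := by
    rw [hgdef]
    rw [Finset.sum_sub_distrib, ← Finset.mul_sum]
    have e1 : ∑ x : G, (if x = 0 then (1:ℝ) else 0) = 1 := by
      rw [Finset.sum_ite_eq' Finset.univ (0:G) (fun _ => (1:ℝ))]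
      simp
    have e2 : ∑ x : G, (if x ∈ H then (1:ℝ) else 0) = p := by
      rw [Finset.sum_boole]
      rw [Finset.filter_mem_eq_inter, Finset.univ_inter, hcardH]
    rw [e1, e2]
    ring
  -- ### cardinality of the configuration set
  have hempty_ne : (∅ : Finset (Fin d)) ≠ (univ : Finset (Fin d)) := by
    intro h
    exact (Finset.univ_nonempty (α := Fin d)).ne_empty h.symm
  have hconfig : config (G := G) L
      = Finset.univ.filter (fun v : Fin d → G => ∑ i, L 0 i • v i = 0) := rfl
  have hcardC : (((config (G := G) L).card : ℝ)) = (n:ℝ) ^ (d-1) := by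
    have hkey := key_sum (A := G) (c := fun i => L 0 i) hcop hempty_ne (fun _ => (1:ℝ))
    rw [hconfig]
    simpa using hkey
  -- ### coprimality over `ZMod p`
  have hcop' : ∀ i, IsCoprime (L 0 i) ((Fintype.card (ZMod p) : ℤ)) := by
    intro i
    rw [ZMod.card]
    exact (hcop i).of_isCoprime_of_dvd_right (Int.natCast_dvd_natCast.2 hpn)
  -- ### the sum over the configuration of the product of g
  set Cp : Finset (Fin d → ZMod p) :=
    Finset.univ.filter (fun k : Fin d → ZMod p => ∑ i, L 0 i • k i = 0) with hCpdef
  set cc : ZMod p → ℝ := fun k => (p:ℝ) * (if k = 0 then 1 else 0) - 1 with hccdef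
  have hι0 : ∀ k : ZMod p, ι k = 0 ↔ k = 0 :=
    fun k => ⟨fun h => hι_inj (by rw [h, map_zero]), fun h => by rw [h, map_zero]⟩
  have hmemH : ∀ k : ZMod p, ι k ∈ H := fun k => Finset.mem_image_of_mem _ (Finset.mem_univ k)
  have hgι : ∀ k : ZMod p, g (ι k) = cc k := by
    intro k
    show (p:ℝ) * (if ι k = 0 then 1 else 0) - (if ι k ∈ H then 1 else 0)
        = (p:ℝ) * (if k = 0 then 1 else 0) - 1
    rw [if_pos (hmemH k)]
    by_cases hk : k = 0
    · rw [if_pos ((hι0 k).2 hk), if_pos hk]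
    · rw [if_neg (fun h => hk ((hι0 k).1 h)), if_neg hk]
  have hsec : ∀ x ∈ H, ι (Function.invFun ι x) = x := by
    intro x hx
    obtain ⟨k, _, hk⟩ := Finset.mem_image.1 hx
    exact Function.invFun_eq ⟨k, hk⟩
  have hbij : ∑ k ∈ Cp, ∏ i, cc (k i)
      = ∑ v ∈ (config (G := G) L).filter (fun v => ∀ i, v i ∈ H), ∏ i, g (v i) := by
    refine Finset.sum_nbij' (fun k => fun idx => ι (k idx))
      (fun v => fun idx => Function.invFun ι (v idx)) ?_ ?_ ?_ ?_ ?_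
    · intro k hk
      rw [hCpdef] at hk
      simp only [Finset.mem_filter, Finset.mem_univ, true_and] at hk
      rw [Finset.mem_filter, hconfig, Finset.mem_filter]
      refine ⟨⟨Finset.mem_univ _, ?_⟩, fun i => hmemH _⟩
      have hsmul : ∀ i : Fin d, L 0 i • ι (k i) = ι (L 0 i • k i) :=
        fun i => (map_zsmul ι _ _).symm
      rw [Finset.sum_congr rfl fun i _ => hsmul i, ← map_sum, hk, map_zero]
    · intro v hv
      rw [Finset.mem_filter, hconfig, Finset.mem_filter] at hv
      obtain ⟨⟨-, hv0⟩, hvH⟩ := hv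
      rw [hCpdef, Finset.mem_filter]
      refine ⟨Finset.mem_univ _, ?_⟩
      apply hι_inj
      rw [map_sum, map_zero]
      have hsmul : ∀ i : Fin d, ι (L 0 i • Function.invFun ι (v i)) = L 0 i • v i := by
        intro i
        rw [map_zsmul, hsec _ (hvH i)]
      rw [Finset.sum_congr rfl fun i _ => hsmul i, hv0]
    · intro k _
      funext idx
      exact Function.leftInverse_invFun hι_inj (k idx)
    · intro v hv
      rw [Finset.mem_filter] at hv
      funext idx
      exact hsec _ (hv.2 idx)
    · intro k _
      exact Finset.prod_congr rfl fun i _ => (hgι (k i)).symm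
  have hrestrict : ∑ v ∈ config (G := G) L, ∏ i, g (v i)
      = ∑ v ∈ (config (G := G) L).filter (fun v => ∀ i, v i ∈ H), ∏ i, g (v i) := by
    refine (Finset.sum_subset (Finset.filter_subset _ _) ?_).symm
    intro v hv hvn
    rw [Finset.mem_filter] at hvn
    push_neg at hvn
    obtain ⟨i, hi⟩ := hvn hv
    refine Finset.prod_eq_zero (Finset.mem_univ i) ?_
    have hne : v i ≠ 0 := fun h => hi (h ▸ h0H)
    show (p:ℝ) * (if v i = 0 then 1 else 0) - (if v i ∈ H then 1 else 0) = 0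
    rw [if_neg hne, if_neg hi]
    ring
  -- delta function sums over ZMod p
  have hdelta_sum : ∑ x : ZMod p, (if x = 0 then (1:ℝ) else 0) = 1 := by
    rw [Finset.sum_ite_eq' Finset.univ (0 : ZMod p) fun _ => (1:ℝ)]
    simp
  have hN : ∀ S : Finset (Fin d), S ≠ univ →
      ∑ k ∈ Cp, ∏ i ∈ S, (if k i = 0 then (1:ℝ) else 0) = (p:ℝ) ^ (d - S.card - 1) := by
    intro S hS
    have hkey := key_sum (A := ZMod p) (c := fun i => L 0 i) hcop' hS
      (fun x => if x = 0 then (1:ℝ) else 0)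
    rw [hCpdef]
    simpa [ZMod.card, hdelta_sum] using hkey
  have hNuniv : ∑ k ∈ Cp, ∏ i, (if k i = 0 then (1:ℝ) else 0) = 1 := by
    have h1 : ∀ k : Fin d → ZMod p, (∏ i, (if k i = 0 then (1:ℝ) else 0))
        = if k = 0 then 1 else 0 := by
      intro k
      by_cases hk : k = 0
      · subst hk; simp
      · rw [if_neg hk]
        obtain ⟨i, hi⟩ := Function.ne_iff.1 hk
        simp only [Pi.zero_apply] at hi
        exact Finset.prod_eq_zero (Finset.mem_univ i) (by simp [hi])
    rw [Finset.sum_congr rfl fun k _ => h1 k]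
    rw [Finset.sum_ite_eq' Cp (0 : Fin d → ZMod p) fun _ => (1:ℝ)]
    rw [if_pos]
    rw [hCpdef, Finset.mem_filter]
    refine ⟨Finset.mem_univ _, by simp⟩
  -- signed sum over the powerset
  have hsum_sign : ∑ S ∈ (univ : Finset (Fin d)).powerset, (-1:ℝ) ^ (d - S.card) = 0 := by
    have h0 : ∏ _i : Fin d, ((1:ℝ) + (-1)) = 0 := by
      norm_num [Finset.prod_const, zero_pow hd1.ne']
    rw [Finset.prod_add] at h0
    have h1 : ∀ S ∈ (univ : Finset (Fin d)).powerset,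
        (-1:ℝ) ^ (d - S.card) = (∏ _i ∈ S, (1:ℝ)) * ∏ _i ∈ univ \ S, (-1:ℝ) := by
      intro S hS
      rw [Finset.prod_const_one, one_mul, Finset.prod_const,
        Finset.card_sdiff_of_subset (Finset.mem_powerset.1 hS), Finset.card_univ, Fintype.card_fin]
    rw [Finset.sum_congr rfl h1]
    exact h0
  have herase_sign : ∑ S ∈ ((univ : Finset (Fin d)).powerset.erase univ),
      (-1:ℝ) ^ (d - S.card) = -1 := by
    have h2 := Finset.sum_erase_add ((univ : Finset (Fin d)).powerset)
      (fun S => (-1:ℝ) ^ (d - S.card)) (Finset.mem_powerset_self _)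
    rw [hsum_sign] at h2
    have h3 : d - (univ : Finset (Fin d)).card = 0 := by
      rw [Finset.card_univ, Fintype.card_fin]; omega
    have h2' : (∑ S ∈ ((univ : Finset (Fin d)).powerset.erase univ),
        (-1:ℝ) ^ (d - S.card)) + (-1:ℝ) ^ (d - (univ : Finset (Fin d)).card) = 0 := h2
    rw [h3, pow_zero] at h2'
    linarith
  -- the value of the g-sum over the configuration
  have hCp_val : ∑ k ∈ Cp, ∏ i, cc (k i) = (p:ℝ) ^ (d-1) * ((p:ℝ) - 1) := by
    have hterm : ∀ k : Fin d → ZMod p, (∏ i, cc (k i))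
        = ∑ S ∈ (univ : Finset (Fin d)).powerset,
            ((p:ℝ) ^ S.card * ∏ i ∈ S, (if k i = 0 then (1:ℝ) else 0))
              * (-1:ℝ) ^ (d - S.card) := by
      intro k
      have he : ∀ i : Fin d, cc (k i)
          = ((p:ℝ) * (if k i = 0 then 1 else 0)) + (-1) := by
        intro i; rw [hccdef]; ring
      rw [Finset.prod_congr rfl fun i _ => he i, Finset.prod_add]
      refine Finset.sum_congr rfl fun S hS => ?_
      rw [Finset.prod_mul_distrib, Finset.prod_const, Finset.prod_const,
        Finset.card_sdiff_of_subset (Finset.mem_powerset.1 hS), Finset.card_univ, Fintype.card_fin]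
    rw [Finset.sum_congr rfl fun k _ => hterm k, Finset.sum_comm]
    have hinner : ∀ S ∈ (univ : Finset (Fin d)).powerset,
        (∑ k ∈ Cp, ((p:ℝ) ^ S.card * ∏ i ∈ S, (if k i = 0 then (1:ℝ) else 0))
            * (-1:ℝ) ^ (d - S.card))
          = if S = univ then (p:ℝ) ^ d
            else (p:ℝ) ^ (d-1) * (-1:ℝ) ^ (d - S.card) := by
      intro S hS
      have hpull : (∑ k ∈ Cp, ((p:ℝ) ^ S.card * ∏ i ∈ S, (if k i = 0 then (1:ℝ) else 0))
            * (-1:ℝ) ^ (d - S.card))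
          = (p:ℝ) ^ S.card * (∑ k ∈ Cp, ∏ i ∈ S, (if k i = 0 then (1:ℝ) else 0))
              * (-1:ℝ) ^ (d - S.card) := by
        rw [Finset.mul_sum, Finset.sum_mul]
      rw [hpull]
      by_cases hSu : S = univ
      · subst hSu
        rw [hNuniv, if_pos rfl]
        have : d - (univ : Finset (Fin d)).card = 0 := by
          rw [Finset.card_univ, Fintype.card_fin]; omega
        rw [this, pow_zero, Finset.card_univ, Fintype.card_fin]
        ring
      · rw [hN S hSu, if_neg hSu]
        have hlt : S.card < d := by
          have := Finset.card_lt_card (Finset.ssubset_univ_iff.2 hSu)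
          simpa using this
        rw [← pow_add]
        congr 2
        omega
    rw [Finset.sum_congr rfl hinner]
    rw [← Finset.sum_erase_add _ _ (Finset.mem_powerset_self (univ : Finset (Fin d)))]
    rw [if_pos rfl]
    have herase : ∑ S ∈ ((univ : Finset (Fin d)).powerset.erase univ),
        (if S = univ then (p:ℝ) ^ d else (p:ℝ) ^ (d-1) * (-1:ℝ) ^ (d - S.card))
        = (p:ℝ) ^ (d-1) * ∑ S ∈ ((univ : Finset (Fin d)).powerset.erase univ),
            (-1:ℝ) ^ (d - S.card) := by
      rw [Finset.mul_sum]
      exact Finset.sum_congr rfl fun S hS => by rw [if_neg (Finset.mem_erase.1 hS).1]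
    rw [herase, herase_sign]
    have hpd : (p:ℝ) ^ d = (p:ℝ) ^ (d-1) * (p:ℝ) := by
      rw [← pow_succ]
      congr 1
      omega
    rw [hpd]
    ring
  have hCg : ∑ v ∈ config (G := G) L, ∏ i, g (v i) = (p:ℝ) ^ (d-1) * ((p:ℝ) - 1) := by
    rw [hrestrict, ← hbij, hCp_val]
  -- ### the test function f = 1/2 + e * g
  have hp2 : (2:ℝ) ≤ (p:ℝ) := by exact_mod_cast hp.two_le
  have hp1 : (1:ℝ) ≤ (p:ℝ) - 1 := by linarith
  set e : ℝ := -(1/(2*((p:ℝ)-1))) with hedef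
  set f : G → ℝ := fun x => 1/2 + e * g x with hfdef
  have he_neg : e < 0 := by
    rw [hedef]
    have h1 : (0:ℝ) < 2*((p:ℝ)-1) := by linarith
    have := one_div_pos.2 h1
    linarith
  have hrange : ∀ x, f x ∈ Set.Icc (0:ℝ) 1 := by
    intro x
    have hfx : f x = 1/2 + e * ((p:ℝ) * (if x = 0 then 1 else 0) - (if x ∈ H then 1 else 0)) :=
      rfl
    have hP1 : (0:ℝ) < (p:ℝ) - 1 := by linarith
    rw [Set.mem_Icc, hfx, hedef]
    by_cases hx0 : x = 0
    · rw [if_pos hx0, if_pos (by rw [hx0]; exact h0H)]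
      have heq : 1/2 + -(1/(2*((p:ℝ)-1))) * ((p:ℝ) * 1 - 1) = 0 := by
        field_simp
        ring
      rw [heq]
      norm_num
    · rw [if_neg hx0]
      have hhalf : (1:ℝ)/(2*((p:ℝ)-1)) ≤ 1/2 :=
        one_div_le_one_div_of_le (by norm_num) (by linarith)
      have hpos : (0:ℝ) < 1/(2*((p:ℝ)-1)) := one_div_pos.2 (by linarith)
      by_cases hxH : x ∈ H
      · rw [if_pos hxH]
        have heq2 : 1/2 + -(1/(2*((p:ℝ)-1))) * ((p:ℝ) * 0 - 1)
            = 1/2 + 1/(2*((p:ℝ)-1)) := by ring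
        rw [heq2]
        constructor
        · linarith
        · linarith
      · rw [if_neg hxH]
        have heq3 : 1/2 + -(1/(2*((p:ℝ)-1))) * ((p:ℝ) * 0 - 0) = 1/2 := by ring
        rw [heq3]
        norm_num
  have hn0 : (0:ℝ) < (n:ℝ) := by
    have : (0:ℕ) < n := by omega
    exact_mod_cast this
  have hf_sum : ∑ x, f x = (n:ℝ) * (1/2) := by
    have hfe : ∀ x : G, f x = 1/2 + e * g x := fun x => rfl
    rw [Finset.sum_congr rfl fun x _ => hfe x, Finset.sum_add_distrib, ← Finset.mul_sum,
      hg_sum, mul_zero, add_zero, Finset.sum_const, Finset.card_univ, nsmul_eq_mul]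
  have havg : avg f = 1/2 := by
    show (∑ x, f x) / ((Fintype.card G : ℝ)) = 1/2
    rw [hf_sum]
    rw [mul_comm, mul_div_assoc]
    rw [div_self (ne_of_gt hn0)]
    ring
  -- ### the main expansion
  have hMain : ∑ v ∈ config (G := G) L, ∏ i, f (v i)
      = (1/2:ℝ)^d * (n:ℝ)^(d-1) + e^d * ((p:ℝ)^(d-1) * ((p:ℝ) - 1)) := by
    have hterm : ∀ v : Fin d → G, (∏ i, f (v i))
        = ∑ S ∈ (univ : Finset (Fin d)).powerset,
            (e ^ S.card * ∏ i ∈ S, g (v i)) * (1/2:ℝ) ^ (d - S.card) := by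
      intro v
      have hfe : ∀ i : Fin d, f (v i) = (e * g (v i)) + 1/2 := fun i => add_comm (1/2) _
      rw [Finset.prod_congr rfl fun i _ => hfe i, Finset.prod_add]
      refine Finset.sum_congr rfl fun S hS => ?_
      rw [Finset.prod_mul_distrib, Finset.prod_const, Finset.prod_const,
        Finset.card_sdiff_of_subset (Finset.mem_powerset.1 hS), Finset.card_univ, Fintype.card_fin]
    rw [Finset.sum_congr rfl fun v _ => hterm v, Finset.sum_comm]
    have hinner : ∀ S ∈ (univ : Finset (Fin d)).powerset,
        (∑ v ∈ config (G := G) L, (e ^ S.card * ∏ i ∈ S, g (v i)) * (1/2:ℝ) ^ (d - S.card))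
          = if S = univ then e^d * ((p:ℝ)^(d-1) * ((p:ℝ) - 1))
            else (if S = ∅ then (1/2:ℝ)^d * (n:ℝ)^(d-1) else 0) := by
      intro S hS
      have hpull : (∑ v ∈ config (G := G) L,
            (e ^ S.card * ∏ i ∈ S, g (v i)) * (1/2:ℝ) ^ (d - S.card))
          = e ^ S.card * (∑ v ∈ config (G := G) L, ∏ i ∈ S, g (v i))
              * (1/2:ℝ) ^ (d - S.card) := by
        rw [Finset.mul_sum, Finset.sum_mul]
      rw [hpull]
      by_cases hSu : S = univ
      · subst hSu
        rw [hCg, if_pos rfl]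
        have h0 : d - (univ : Finset (Fin d)).card = 0 := by
          rw [Finset.card_univ, Fintype.card_fin]; omega
        rw [h0, pow_zero, Finset.card_univ, Fintype.card_fin]
        ring
      · rw [if_neg hSu, hconfig]
        have hkey := key_sum (A := G) (c := fun i => L 0 i) hcop hSu g
        have hkey' : (∑ v ∈ Finset.univ.filter (fun v : Fin d → G => ∑ i, L 0 i • v i = 0),
            ∏ i ∈ S, g (v i)) = (n:ℝ) ^ (d - S.card - 1) * (∑ x, g x) ^ S.card := by
          simpa using hkey
        rw [hkey', hg_sum]
        by_cases hSe : S = ∅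
        · subst hSe
          rw [if_pos rfl]
          simp only [Finset.card_empty, pow_zero, Nat.sub_zero]
          ring
        · rw [if_neg hSe]
          rw [zero_pow (by simpa [Finset.card_eq_zero] using hSe)]
          ring
    rw [Finset.sum_congr rfl hinner]
    rw [← Finset.sum_erase_add _ _ (Finset.mem_powerset_self (univ : Finset (Fin d)))]
    rw [if_pos rfl]
    have herase : ∑ S ∈ ((univ : Finset (Fin d)).powerset.erase univ),
        (if S = univ then e^d * ((p:ℝ)^(d-1) * ((p:ℝ) - 1))
          else (if S = ∅ then (1/2:ℝ)^d * (n:ℝ)^(d-1) else 0))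
        = (1/2:ℝ)^d * (n:ℝ)^(d-1) := by
      have hcongr : ∀ S ∈ ((univ : Finset (Fin d)).powerset.erase univ),
          (if S = univ then e^d * ((p:ℝ)^(d-1) * ((p:ℝ) - 1))
            else (if S = ∅ then (1/2:ℝ)^d * (n:ℝ)^(d-1) else 0))
          = (if S = ∅ then (1/2:ℝ)^d * (n:ℝ)^(d-1) else 0) := by
        intro S hS
        rw [if_neg (Finset.mem_erase.1 hS).1]
      rw [Finset.sum_congr rfl hcongr]
      rw [Finset.sum_ite_eq' _ (∅ : Finset (Fin d)) (fun _ => (1/2:ℝ)^d * (n:ℝ)^(d-1))]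
      rw [if_pos (Finset.mem_erase.2 ⟨hempty_ne, Finset.empty_mem_powerset _⟩)]
    rw [herase]
  -- ### conclusion
  refine ⟨f, hrange, ?_⟩
  rw [havg]
  show (∑ v ∈ config (G := G) L, ∏ i, f (v i)) / (((config (G := G) L).card : ℝ)) < (1/2:ℝ)^d
  rw [hMain, hcardC]
  have hP : (0:ℝ) < (p:ℝ)^(d-1) * ((p:ℝ) - 1) :=
    mul_pos (pow_pos (by linarith) _) (by linarith)
  have hEd : e^d < 0 := hd.pow_neg he_neg
  have hNpos : (0:ℝ) < (n:ℝ)^(d-1) := pow_pos hn0 _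
  rw [div_lt_iff₀ hNpos]
  have := mul_neg_of_neg_of_pos hEd hP
  linarith
end

section
/- For every d ∈ ℕ there exists a constant C such that the following holds: for every finite abelian group G with |G| > C and every matrix L ∈ ℤ^{1×d} all of whose coefficients are coprime to |G|, if d is odd then L is not Sidorenko in G; that is, there exists a subset A ⊆ G with t_L(A) < (|A|/|G|)^d. -/
open Finset

variable {G : Type*} [AddCommGroup G] [Fintype G] [DecidableEq G]

section Aux

variable {H : Type*} [AddCommGroup H] [Fintype H] [DecidableEq H]

lemma smul_bij' {a : ℤ} (h : IsCoprime a (Fintype.card H : ℤ)) :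
    Function.Bijective (fun x : H => a • x) := by
  rw [Fintype.bijective_iff_injective_and_card]
  refine ⟨fun x y hxy => ?_, rfl⟩
  obtain ⟨u, v, huv⟩ := h
  have hcard : ∀ z : H, (Fintype.card H : ℤ) • z = 0 := fun z => by
    rw [natCast_zsmul]; exact card_nsmul_eq_zero
  have key : ∀ z : H, z = u • (a • z) := by
    intro z
    conv_lhs => rw [← one_smul ℤ z, ← huv]
    rw [add_smul, mul_smul, mul_smul, hcard, smul_zero, add_zero]
  simp only at hxy
  rw [key x, key y, hxy]

/-- counting solutions with all coordinates satisfying `P`. -/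
def cnt (d : ℕ) (a : Fin d → ℤ) (P : H → Prop) [DecidablePred P] (c : H) : ℕ :=
  (Finset.univ.filter fun v : Fin d → H => (∑ i, a i • v i) = c ∧ ∀ i, P (v i)).card

lemma cnt_zero (a : Fin 0 → ℤ) (P : H → Prop) [DecidablePred P] (c : H) :
    cnt 0 a P c = if c = 0 then 1 else 0 := by
  unfold cnt
  split_ifs with hc
  · subst hc
    rw [Finset.filter_true_of_mem (fun v _ => ⟨by simp, fun i => i.elim0⟩), Finset.card_univ]
    simp
  · rw [Finset.card_eq_zero, Finset.filter_eq_empty_iff]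
    intro v _
    simp only [Finset.univ_eq_empty, Finset.sum_empty, not_and]
    intro h
    exact absurd ((by simp : (∑ i : Fin 0, a i • v i) = 0) ▸ h).symm hc

lemma cnt_succ (d : ℕ) (a : Fin (d+1) → ℤ) (P : H → Prop) [DecidablePred P] (c : H) :
    cnt (d+1) a P c
      = ∑ x : H, if P x then cnt d (fun i => a i.succ) P (c - a 0 • x) else 0 := by
  unfold cnt
  rw [Finset.card_filter]
  have step := Fintype.sum_equiv ((Fin.consEquiv (fun _ : Fin (d+1) => H)).symm)
      (fun v : Fin (d+1) → H => if ((∑ i, a i • v i) = c ∧ ∀ i, P (v i)) then (1:ℕ) else 0)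
      (fun p : H × (Fin d → H) => if ((∑ i, a i.succ • p.2 i) = c - a 0 • p.1 ∧ (P p.1 ∧ ∀ i, P (p.2 i))) then 1 else 0)
      ?_
  · rw [step, Fintype.sum_prod_type]
    congr 1; ext x
    by_cases hx : P x
    · simp only [hx, true_and, if_true]
      rw [Finset.card_filter]
    · simp [hx]
  · intro v
    simp only [Fin.consEquiv_symm_apply]
    refine if_congr ?_ rfl rfl
    show _ ↔ (_ = _ ∧ P (v 0) ∧ ∀ i : Fin d, P (v i.succ))
    constructor
    · rintro ⟨hs, hP⟩
      rw [Fin.sum_univ_succ] at hs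
      exact ⟨eq_sub_of_add_eq' hs, hP 0, fun i => hP i.succ⟩
    · rintro ⟨hs, hP0, hPs⟩
      exact ⟨by rw [Fin.sum_univ_succ]; exact add_eq_of_eq_sub' hs,
        fun i => Fin.cases hP0 hPs i⟩

lemma sum_ite_fiber {a : ℤ} (h : IsCoprime a (Fintype.card H : ℤ)) (c : H) :
    (∑ x : H, if a • x = c then (1:ℕ) else 0) = 1 := by
  rw [Fintype.sum_bijective _ (smul_bij' h) _ (fun y => if y = c then (1:ℕ) else 0) (fun x => rfl)]
  simp

lemma cnt_true (d : ℕ) (a : Fin (d+1) → ℤ)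
    (ha : ∀ i, IsCoprime (a i) (Fintype.card H : ℤ)) (c : H) :
    cnt (d+1) a (fun _ => True) c = Fintype.card H ^ d := by
  induction d generalizing c with
  | zero =>
    rw [cnt_succ]
    simp only [if_true, cnt_zero, pow_zero]
    rw [Finset.sum_congr rfl (fun x _ => if_congr (by rw [sub_eq_zero, eq_comm]) rfl rfl)]
    exact sum_ite_fiber (ha 0) c
  | succ e ih =>
    rw [cnt_succ]
    simp only [if_true]
    rw [Finset.sum_congr rfl (fun x _ => ih (fun i => a i.succ) (fun i => ha i.succ) (c - a 0 • x))]
    simp [mul_comm, pow_succ]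

lemma card_fiber_ne {a : ℤ} (h : IsCoprime a (Fintype.card H : ℤ)) (c : H) :
    ((Finset.univ.erase (0:H)).filter fun x => a • x = c).card = if c = 0 then 0 else 1 := by
  obtain ⟨x0, hx0, hx0u⟩ := (smul_bij' h).existsUnique c
  simp only at hx0 hx0u
  split_ifs with hc
  · rw [Finset.card_eq_zero, Finset.filter_eq_empty_iff]
    intro x hx hax
    have : x = (0 : H) := by
      have h0 : a • (0 : H) = c := by rw [smul_zero, hc]
      rw [hx0u x hax, hx0u 0 h0]
    exact (Finset.mem_erase.mp hx).1 this
  · rw [Finset.card_eq_one]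
    refine ⟨x0, ?_⟩
    ext y
    simp only [Finset.mem_filter, Finset.mem_erase, Finset.mem_univ, true_and, and_true,
      Finset.mem_singleton]
    constructor
    · rintro ⟨_, hy⟩; exact hx0u y hy
    · rintro rfl
      refine ⟨fun h0 => hc ?_, hx0⟩
      rw [← hx0, h0, smul_zero]
    
lemma card_erase_zero : ((Finset.univ.erase (0:H)).card : ℤ) = (Fintype.card H : ℤ) - 1 := by
  rw [Finset.card_erase_of_mem (Finset.mem_univ 0), Finset.card_univ]
  have : 1 ≤ Fintype.card H := Fintype.card_pos
  push_cast [Nat.cast_sub this]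
  ring

lemma cnt_ne (d : ℕ) (a : Fin d → ℤ)
    (ha : ∀ i, IsCoprime (a i) (Fintype.card H : ℤ)) (c : H) :
    (Fintype.card H : ℤ) * cnt d a (fun x : H => x ≠ 0) c
      = ((Fintype.card H : ℤ) - 1) ^ d
        + (if c = 0 then ((Fintype.card H : ℤ) - 1) else -1) * (-1) ^ d := by
  induction d generalizing c with
  | zero =>
    rw [cnt_zero]
    split_ifs <;> push_cast <;> ring
  | succ e ih =>
    rw [cnt_succ]
    push_cast [Finset.mul_sum]
    rw [Finset.sum_congr rfl (fun x _ => by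
      rw [mul_ite, mul_zero, ih (fun i => a i.succ) (fun i => ha i.succ) (c - a 0 • x)])]
    have key : (∑ x ∈ Finset.univ.erase (0:H),
        (if c - a 0 • x = 0 then ((Fintype.card H : ℤ) - 1) else -1))
        = (Fintype.card H : ℤ) * (if c = 0 then 0 else 1) - ((Fintype.card H : ℤ) - 1) := by
      rw [Finset.sum_congr rfl (fun x _ => show _ = (if a 0 • x = c then ((Fintype.card H : ℤ)) else 0) - 1 by
        rw [if_congr (show c - a 0 • x = 0 ↔ a 0 • x = c by rw [sub_eq_zero]; exact eq_comm) rfl rfl]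
        split_ifs <;> ring)]
      rw [Finset.sum_sub_distrib, ← Finset.sum_filter, Finset.sum_const, Finset.sum_const,
        card_fiber_ne (ha 0) c, nsmul_eq_mul, nsmul_eq_mul, mul_one, card_erase_zero]
      split_ifs <;> push_cast <;> ring
    rw [← Finset.sum_filter, Finset.filter_ne', Finset.sum_add_distrib, Finset.sum_const,
      ← Finset.sum_mul, key, nsmul_eq_mul, card_erase_zero]
    split_ifs <;> ring

end Aux

/-- For every `d` there is a constant `C` such that: for every finite abelian group `G` with
`|G| > C` and every `L ∈ ℤ^{1×d}` all of whose coefficients are coprime to `|G|`, if `d` is odd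
then `L` is not Sidorenko in `G`. -/
theorem single_equation_odd_not_sidorenko (d : ℕ) :
    ∃ C : ℝ, ∀ (H : Type*) [AddCommGroup H] [Fintype H] [DecidableEq H],
      (Fintype.card H : ℝ) > C →
      ∀ L : Matrix (Fin 1) (Fin d) ℤ,
        (∀ i, IsCoprime (L 0 i) (Fintype.card H : ℤ)) → Odd d →
        ∃ A : Finset H,
          tL L (fun x => if x ∈ A then (1 : ℝ) else 0) <
            ((A.card : ℝ) / (Fintype.card H : ℝ)) ^ d := by
  refine ⟨1, ?_⟩
  intro H _ _ _ hn L hL hd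
  obtain ⟨k, rfl⟩ := hd
  have hn1 : 1 ≤ Fintype.card H := Fintype.card_pos
  have hn2 : 2 ≤ Fintype.card H := by
    rcases Nat.lt_or_ge (Fintype.card H) 2 with h | h
    · interval_cases h' : Fintype.card H <;> norm_num [h'] at hn <;> omega
    · exact h
  refine ⟨Finset.univ.erase 0, ?_⟩
  have hnum : (∑ v ∈ config L, ∏ i, (if v i ∈ Finset.univ.erase (0:H) then (1:ℝ) else 0))
      = ((cnt (2*k+1) (L 0) (fun x : H => x ≠ 0) (0 : H) : ℕ) : ℝ) := by
    have hterm : ∀ v : Fin (2*k+1) → H,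
        (∏ i, if v i ∈ Finset.univ.erase (0:H) then (1:ℝ) else 0)
          = if (∀ i, v i ≠ 0) then 1 else 0 := fun v => by
      by_cases hv : ∀ i, v i ≠ 0
      · rw [if_pos hv]
        exact Finset.prod_eq_one fun i _ => by
          rw [if_pos (Finset.mem_erase.mpr ⟨hv i, Finset.mem_univ _⟩)]
      · rw [if_neg hv]
        push_neg at hv
        obtain ⟨i, hi⟩ := hv
        exact Finset.prod_eq_zero (Finset.mem_univ i) (by simp [hi])
    rw [Finset.sum_congr rfl (fun v _ => hterm v), Finset.sum_boole]
    congr 1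
    unfold config cnt
    rw [Finset.filter_filter]
  have hden : (config (G := H) L).card = Fintype.card H ^ (2*k) := by
    rw [← cnt_true (2*k) (L 0) hL (0 : H)]
    unfold config cnt
    congr 1
    exact Finset.filter_congr (fun v _ => by simp)
  have hA : (((Finset.univ.erase (0:H)).card : ℕ) : ℝ) = (Fintype.card H : ℝ) - 1 := by
    rw [Finset.card_erase_of_mem (Finset.mem_univ 0), Finset.card_univ]
    push_cast [Nat.cast_sub hn1]
    ring
  have hS : (Fintype.card H : ℤ) * (cnt (2*k+1) (L 0) (fun x : H => x ≠ 0) (0:H) : ℤ)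
      = ((Fintype.card H : ℤ) - 1)^(2*k+1) - ((Fintype.card H : ℤ) - 1) := by
    rw [cnt_ne _ _ hL]
    rw [if_pos rfl, Odd.neg_one_pow ⟨k, by ring⟩]
    ring
  unfold tL
  rw [hnum, hden, hA]
  have hSR : (Fintype.card H : ℝ) * ((cnt (2*k+1) (L 0) (fun x : H => x ≠ 0) (0:H) : ℕ) : ℝ)
      = ((Fintype.card H : ℝ) - 1)^(2*k+1) - ((Fintype.card H : ℝ) - 1) := by
    exact_mod_cast hS
  have hcard : (1:ℝ) < (Fintype.card H : ℝ) := hn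
  have hpow : (0:ℝ) < (Fintype.card H : ℝ) ^ (2*k) := by positivity
  rw [div_pow]
  push_cast
  rw [div_lt_div_iff₀ hpow (by positivity)]
  calc ((cnt (2*k+1) (L 0) (fun x : H => x ≠ 0) (0:H) : ℕ) : ℝ) * (Fintype.card H : ℝ)^(2*k+1)
      = ((Fintype.card H : ℝ) * ((cnt (2*k+1) (L 0) (fun x : H => x ≠ 0) (0:H) : ℕ) : ℝ))
          * (Fintype.card H : ℝ)^(2*k) := by ring
    _ = (((Fintype.card H : ℝ) - 1)^(2*k+1) - ((Fintype.card H : ℝ) - 1))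
          * (Fintype.card H : ℝ)^(2*k) := by rw [hSR]
    _ < ((Fintype.card H : ℝ) - 1)^(2*k+1) * (Fintype.card H : ℝ)^(2*k) := by
        nlinarith [mul_pos (sub_pos.mpr hcard) hpow]
end

section
/- Let G be a finite abelian group and let L ∈ ℤ^{1×d} have full rank in G, i.e. the induced map G^d → G, v ↦ Σ_{i=1}^d L_{1i}·v_i, is surjective. Then for every f : G → [0,1], t_L(f) = Σ_{γ∈Ĝ} Π_{i=1}^d f̂(γ^{L_{1i}}). -/
open Finset

variable {G : Type*} [AddCommGroup G] [Fintype G] [DecidableEq G]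

/-- The Fourier transform `f̂(γ) = (1/|G|) ∑ x, γ(x) f(x)` of `f : G → ℝ` at a character `γ` of
`G` (characters of the finite abelian group `G` are represented as `AddChar G ℂ`; they
automatically take values on the unit circle). -/
noncomputable def ft (f : G → ℝ) (γ : AddChar G ℂ) : ℂ :=
  (∑ x, γ x * (f x : ℂ)) / (Fintype.card G : ℂ)

lemma addchar_map_sum {ι : Type*} (γ : AddChar G ℂ) (s : Finset ι) (g : ι → G) :
    γ (∑ i ∈ s, g i) = ∏ i ∈ s, γ (g i) := by
  induction s using Finset.cons_induction with
  | empty => simp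
  | cons i s hi ih => simp [Finset.sum_cons, Finset.prod_cons, AddChar.map_add_eq_mul, ih]

lemma config_card_mul {d : ℕ} (L : Matrix (Fin 1) (Fin d) ℤ)
    (hrank : Function.Surjective (fun v : Fin d → G => ∑ i, L 0 i • v i)) :
    ((config (G := G) L).card : ℕ) * Fintype.card G = Fintype.card G ^ d := by
  classical
  let φ : (Fin d → G) →+ G :=
    { toFun := fun v => ∑ i, L 0 i • v i
      map_zero' := by simp
      map_add' := by intro a b; simp [smul_add, Finset.sum_add_distrib] }
  have hs : Function.Surjective φ := hrank
  have h1 : Nat.card (Fin d → G) =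
      Nat.card ((Fin d → G) ⧸ φ.ker) * Nat.card φ.ker :=
    AddSubgroup.card_eq_card_quotient_mul_card_addSubgroup φ.ker
  have h2 : Nat.card ((Fin d → G) ⧸ φ.ker) = Nat.card G :=
    Nat.card_congr (QuotientAddGroup.quotientKerEquivOfSurjective φ hs).toEquiv
  have h3 : Nat.card φ.ker = (config (G := G) L).card := by
    rw [Nat.card_eq_fintype_card, Fintype.card_subtype]
    congr 1
    ext v
    simp [config, AddMonoidHom.mem_ker, φ]
  have h4 : Nat.card (Fin d → G) = Fintype.card G ^ d := by
    simp [Nat.card_eq_fintype_card, Fintype.card_fun]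
  rw [h2, h3, h4] at h1
  rw [mul_comm] at h1
  simp [Nat.card_eq_fintype_card] at h1 ⊢
  omega

/-- If `L ∈ ℤ^{1×d}` has full rank in `G` (the induced map `G^d → G` is surjective), then for
every `f : G → [0,1]` one has `t_L(f) = ∑_{γ ∈ Ĝ} ∏ i, f̂(γ^{L_{1i}})`. -/
theorem fourier_density_characters {d : ℕ} (L : Matrix (Fin 1) (Fin d) ℤ)
    (hrank : Function.Surjective (fun v : Fin d → G => ∑ i, L 0 i • v i))
    (f : G → ℝ) (hf : ∀ x, f x ∈ Set.Icc (0 : ℝ) 1) :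
    (tL L f : ℂ) = ∑ γ : AddChar G ℂ, ∏ i, ft f (γ ^ (L 0 i)) := by
  classical
  have hcard := config_card_mul (G := G) L hrank
  have hG : (0 : ℕ) < Fintype.card G := Fintype.card_pos
  -- RHS computation
  have key : ∑ γ : AddChar G ℂ, ∏ i, ft f (γ ^ (L 0 i))
      = (∑ v ∈ config (G := G) L, ∏ i, (f (v i) : ℂ)) * (Fintype.card G : ℂ)
        / (Fintype.card G : ℂ) ^ d := by
    have step1 : ∀ γ : AddChar G ℂ, ∏ i, ft f (γ ^ (L 0 i))
        = (∏ i, ∑ x : G, γ (L 0 i • x) * (f x : ℂ)) / (Fintype.card G : ℂ) ^ d := by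
      intro γ
      simp only [ft, AddChar.zpow_apply, ← AddChar.map_zsmul_eq_zpow]
      rw [Finset.prod_div_distrib, Finset.prod_const, Finset.card_univ, Fintype.card_fin]
    calc ∑ γ : AddChar G ℂ, ∏ i, ft f (γ ^ (L 0 i))
        = ∑ γ : AddChar G ℂ, (∏ i, ∑ x : G, γ (L 0 i • x) * (f x : ℂ))
            / (Fintype.card G : ℂ) ^ d := by
          exact Finset.sum_congr rfl fun γ _ => step1 γ
      _ = (∑ γ : AddChar G ℂ, ∑ v : Fin d → G, ∏ i, γ (L 0 i • v i) * (f (v i) : ℂ))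
            / (Fintype.card G : ℂ) ^ d := by
          rw [← Finset.sum_div]
          congr 1
          exact Finset.sum_congr rfl fun γ _ => by
            rw [Finset.prod_univ_sum]
            rw [Fintype.piFinset_univ]
      _ = (∑ v : Fin d → G, (∑ γ : AddChar G ℂ, γ (∑ i, L 0 i • v i)) * ∏ i, (f (v i) : ℂ))
            / (Fintype.card G : ℂ) ^ d := by
          rw [Finset.sum_comm]
          congr 1
          refine Finset.sum_congr rfl fun v _ => ?_
          rw [Finset.sum_mul]
          refine Finset.sum_congr rfl fun γ _ => ?_
          rw [Finset.prod_mul_distrib, addchar_map_sum]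
      _ = (∑ v ∈ config (G := G) L, (Fintype.card G : ℂ) * ∏ i, (f (v i) : ℂ))
            / (Fintype.card G : ℂ) ^ d := by
          congr 1
          rw [config, Finset.sum_filter]
          refine Finset.sum_congr rfl fun v _ => ?_
          rw [AddChar.sum_apply_eq_ite]
          split <;> simp
      _ = (∑ v ∈ config (G := G) L, ∏ i, (f (v i) : ℂ)) * (Fintype.card G : ℂ)
            / (Fintype.card G : ℂ) ^ d := by
          rw [← Finset.mul_sum, mul_comm]
  rw [key]
  -- LHS
  have hC : (0 : Fin d → G) ∈ config (G := G) L := by simp [config]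
  have hCpos : 0 < (config (G := G) L).card := Finset.card_pos.2 ⟨0, hC⟩
  have hcast : ((config (G := G) L).card : ℂ) * (Fintype.card G : ℂ)
      = (Fintype.card G : ℂ) ^ d := by
    exact_mod_cast congrArg (Nat.cast : ℕ → ℂ) hcard
  rw [tL]
  push_cast
  rw [← hcast]
  rw [div_eq_div_iff (by exact_mod_cast hCpos.ne') (mul_ne_zero (Nat.cast_ne_zero.mpr hCpos.ne') (Nat.cast_ne_zero.mpr hG.ne'))]
  ring
end

section
/- Let G be a finite abelian group, d ≥ 3 and L ∈ ℤ^{1×d}. If at least three coefficients of L are coprime to |G|, then |C^#(L)| ≤ (d choose 2) · |C(L)| / |G|. -/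
open Finset

variable {G : Type*} [AddCommGroup G] [Fintype G] [DecidableEq G]

/-- The set `C^#(L)` of non-injective instances of the configuration. -/
def nonInj {d : ℕ} (L : Matrix (Fin 1) (Fin d) ℤ) : Finset (Fin d → G) :=
  (config (G := G) L).filter fun v => ∃ i j, i ≠ j ∧ v i = v j

lemma sum_smul_update_s10 {d : ℕ} (L : Matrix (Fin 1) (Fin d) ℤ) (v : Fin d → G) (t : Fin d) (x : G) :
    ∑ m, L 0 m • Function.update v t x m = (∑ m, L 0 m • v m) + L 0 t • (x - v t) := by
  have h : (fun m => L 0 m • Function.update v t x m)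
      = Function.update (fun m => L 0 m • v m) t (L 0 t • x) := by
    funext m
    by_cases hm : m = t
    · subst hm; simp
    · simp [Function.update_of_ne hm]
  rw [h, Finset.sum_update_of_mem (Finset.mem_univ t), ← Finset.erase_eq,
    Finset.sum_erase_eq_sub (Finset.mem_univ t), smul_sub]
  abel

lemma pair_count {d : ℕ} (L : Matrix (Fin 1) (Fin d) ℤ) (i j k : Fin d)
    (hij : i ≠ j) (hki : k ≠ i) (hkj : k ≠ j)
    (hk : IsCoprime (L 0 k) (Fintype.card G : ℤ)) :
    ((config (G := G) L).filter fun v => v i = v j).card * Fintype.card G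
      ≤ (config (G := G) L).card := by
  obtain ⟨a, b, hab⟩ := hk
  have hinv : ∀ y : G, L 0 k • a • y = y := by
    intro y
    have hcard : (Fintype.card G : ℤ) • y = 0 := by
      rw [natCast_zsmul]; exact card_nsmul_eq_zero
    have h1 : L 0 k • a • y = (a * L 0 k) • y := by rw [smul_smul, mul_comm]
    have ha : a * L 0 k = 1 - b * (Fintype.card G : ℤ) := by linarith
    rw [h1, ha, sub_smul, one_smul, mul_smul, hcard, smul_zero, sub_zero]
  classical
  set S := (config (G := G) L).filter fun v => v i = v j with hS
  have hcardeq : S.card * Fintype.card G = (S ×ˢ (Finset.univ : Finset G)).card := by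
    rw [Finset.card_product, Finset.card_univ]
  rw [hcardeq]
  set φ : (Fin d → G) × G → (Fin d → G) := fun p =>
    Function.update (Function.update p.1 j (p.1 j + p.2)) k
      (p.1 k + a • (-(L 0 j • p.2))) with hφ
  have hφi : ∀ (w : Fin d → G) (h : G), φ (w, h) i = w i := by
    intro w h
    simp only [hφ]
    rw [Function.update_of_ne (Ne.symm hki), Function.update_of_ne hij]
  have hφj : ∀ (w : Fin d → G) (h : G), φ (w, h) j = w j + h := by
    intro w h
    simp only [hφ]
    rw [Function.update_of_ne (Ne.symm hkj), Function.update_self]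
  have hφk : ∀ (w : Fin d → G) (h : G), φ (w, h) k = w k + a • (-(L 0 j • h)) := by
    intro w h
    simp only [hφ]
    rw [Function.update_self]
  have hφm : ∀ (w : Fin d → G) (h : G) (m : Fin d), m ≠ j → m ≠ k → φ (w, h) m = w m := by
    intro w h m hmj hmk
    simp only [hφ]
    rw [Function.update_of_ne hmk, Function.update_of_ne hmj]
  apply Finset.card_le_card_of_injOn φ
  · rintro ⟨v, g⟩ hp
    simp only [Finset.mem_coe, Finset.mem_product, hS, Finset.mem_filter] at hp
    obtain ⟨⟨hv, hvij⟩, -⟩ := hp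
    simp only [config, Finset.mem_coe, Finset.mem_filter, Finset.mem_univ, true_and] at hv ⊢
    have hupd : Function.update v j (v j + g) k = v k := Function.update_of_ne hkj _ _
    simp only [hφ]
    rw [sum_smul_update_s10, sum_smul_update_s10, hupd, hv]
    rw [add_sub_cancel_left, add_sub_cancel_left, hinv]
    abel
  · rintro ⟨v, g⟩ hp ⟨v', g'⟩ hq heq
    simp only [Finset.mem_coe, Finset.mem_product, hS, Finset.mem_filter] at hp hq
    obtain ⟨⟨-, hvij⟩, -⟩ := hp
    obtain ⟨⟨-, hvij'⟩, -⟩ := hq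
    have hi : v i = v' i := by
      have := congrFun heq i
      rwa [hφi, hφi] at this
    have hg : g = g' := by
      have hj := congrFun heq j
      rw [hφj, hφj, ← hvij, ← hvij', hi] at hj
      exact add_left_cancel hj
    have hveq : v = v' := by
      funext m
      by_cases hmj : m = j
      · rw [hmj]
        have hj := congrFun heq j
        rw [hφj, hφj, hg] at hj
        exact add_right_cancel hj
      · by_cases hmk : m = k
        · rw [hmk]
          have hk' := congrFun heq k
          rw [hφk, hφk, hg] at hk'
          exact add_right_cancel hk'
        · have := congrFun heq m
          rwa [hφm _ _ _ hmj hmk, hφm _ _ _ hmj hmk] at this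
    exact Prod.ext hveq hg

lemma card_pairs (d : ℕ) :
    ((Finset.univ : Finset (Fin d × Fin d)).filter fun p => p.1 < p.2).card = d.choose 2 := by
  classical
  rw [Finset.card_filter, Fintype.sum_prod_type_right]
  have h1 : ∀ j : Fin d, (∑ i : Fin d, if (i, j).1 < (i, j).2 then 1 else 0) = (j : ℕ) := by
    intro j
    rw [← Finset.card_filter]
    have : (Finset.univ.filter fun i : Fin d => (i, j).1 < (i, j).2) = Finset.Iio j := by
      ext i; simp
    rw [this, Fin.card_Iio]
  rw [Finset.sum_congr rfl fun j _ => h1 j]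
  rw [Fin.sum_univ_eq_sum_range (fun r => r), Finset.sum_range_id, Nat.choose_two_right]

/-- If `d ≥ 3` and at least three coefficients of `L ∈ ℤ^{1×d}` are coprime to `|G|`, then
`|C^#(L)| ≤ (d choose 2)·|C(L)|/|G|`. -/
theorem non_injective_instances_bound {d : ℕ} (L : Matrix (Fin 1) (Fin d) ℤ)
    (hd : 3 ≤ d)
    (hcop : ∃ i₁ i₂ i₃ : Fin d, i₁ ≠ i₂ ∧ i₁ ≠ i₃ ∧ i₂ ≠ i₃ ∧
      IsCoprime (L 0 i₁) (Fintype.card G : ℤ) ∧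
      IsCoprime (L 0 i₂) (Fintype.card G : ℤ) ∧
      IsCoprime (L 0 i₃) (Fintype.card G : ℤ)) :
    ((nonInj (G := G) L).card : ℝ) ≤
      (d.choose 2 : ℝ) * ((config (G := G) L).card : ℝ) / (Fintype.card G : ℝ) := by
  classical
  obtain ⟨i₁, i₂, i₃, h12, h13, h23, c1, c2, c3⟩ := hcop
  have hkex : ∀ i j : Fin d, ∃ k, k ≠ i ∧ k ≠ j ∧ IsCoprime (L 0 k) (Fintype.card G : ℤ) := by
    intro i j
    by_cases e1 : i₁ ≠ i ∧ i₁ ≠ j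
    · exact ⟨i₁, e1.1, e1.2, c1⟩
    by_cases e2 : i₂ ≠ i ∧ i₂ ≠ j
    · exact ⟨i₂, e2.1, e2.2, c2⟩
    by_cases e3 : i₃ ≠ i ∧ i₃ ≠ j
    · exact ⟨i₃, e3.1, e3.2, c3⟩
    exfalso
    push_neg at e1 e2 e3
    by_cases f1 : i₁ = i
    · by_cases f2 : i₂ = i
      · exact h12 (f1.trans f2.symm)
      · have g2 := e2 f2
        by_cases f3 : i₃ = i
        · exact h13 (f1.trans f3.symm)
        · exact h23 ((e2 f2).trans (e3 f3).symm)
    · have g1 := e1 f1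
      by_cases f2 : i₂ = i
      · by_cases f3 : i₃ = i
        · exact h23 (f2.trans f3.symm)
        · exact h13 (g1.trans (e3 f3).symm)
      · exact h12 (g1.trans (e2 f2).symm)
  set pairs := (Finset.univ : Finset (Fin d × Fin d)).filter fun p => p.1 < p.2 with hpairs
  have hsubset : nonInj (G := G) L ⊆
      pairs.biUnion fun p => (config (G := G) L).filter fun v => v p.1 = v p.2 := by
    intro v hv
    simp only [nonInj, Finset.mem_filter] at hv
    obtain ⟨hvc, i, j, hij, hvij⟩ := hv
    rcases lt_or_gt_of_ne hij with h | h
    · exact Finset.mem_biUnion.2 ⟨(i, j), by simp [hpairs, h],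
        Finset.mem_filter.2 ⟨hvc, hvij⟩⟩
    · exact Finset.mem_biUnion.2 ⟨(j, i), by simp [hpairs, h],
        Finset.mem_filter.2 ⟨hvc, hvij.symm⟩⟩
  have hnat : (nonInj (G := G) L).card ≤
      ∑ p ∈ pairs, ((config (G := G) L).filter fun v => v p.1 = v p.2).card :=
    le_trans (Finset.card_le_card hsubset) (Finset.card_biUnion_le)
  have hGpos : (0 : ℝ) < (Fintype.card G : ℝ) := by
    exact_mod_cast Fintype.card_pos
  have hterm : ∀ p ∈ pairs,
      (((config (G := G) L).filter fun v => v p.1 = v p.2).card : ℝ)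
        ≤ ((config (G := G) L).card : ℝ) / (Fintype.card G : ℝ) := by
    intro p hp
    have hlt : p.1 < p.2 := by
      simp only [hpairs, Finset.mem_filter] at hp; exact hp.2
    obtain ⟨k, hki, hkj, hk⟩ := hkex p.1 p.2
    have := pair_count (G := G) L p.1 p.2 k (ne_of_lt hlt) hki hkj hk
    rw [le_div_iff₀ hGpos]
    exact_mod_cast this
  calc ((nonInj (G := G) L).card : ℝ)
      ≤ ∑ p ∈ pairs, (((config (G := G) L).filter fun v => v p.1 = v p.2).card : ℝ) := by
        exact_mod_cast hnat
    _ ≤ ∑ _p ∈ pairs, ((config (G := G) L).card : ℝ) / (Fintype.card G : ℝ) :=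
        Finset.sum_le_sum hterm
    _ = (pairs.card : ℝ) * (((config (G := G) L).card : ℝ) / (Fintype.card G : ℝ)) := by
        rw [Finset.sum_const, nsmul_eq_mul]
    _ = (d.choose 2 : ℝ) * ((config (G := G) L).card : ℝ) / (Fintype.card G : ℝ) := by
        rw [hpairs, card_pairs]; ring
end

section
/- Let G be a finite abelian group, let 𝔇 : G → Ĝ be a group isomorphism, let d be odd, and let L ∈ ℤ^{1×d} be a matrix all of whose coefficients are coprime to |G|. Then for every f : G → [0,1], t_L(f) + t_L(1−f) = (E(f))^d + (1 − E(f))^d. -/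
open Finset

variable {G : Type*} [AddCommGroup G] [Fintype G] [DecidableEq G]

/-- Multiplication by an integer coprime to `|G|` is a bijection of `G`. -/
private lemma aux_smul_bij {c : ℤ} (hc : IsCoprime c (Fintype.card G : ℤ)) :
    Function.Bijective (fun x : G => c • x) := by
  rw [← Finite.injective_iff_bijective]
  have key : ∀ x : G, c • x = 0 → x = 0 := by
    intro x hx
    obtain ⟨u, v, huv⟩ := hc
    calc x = (u * c + v * (Fintype.card G : ℤ)) • x := by rw [huv, one_smul]
    _ = u • (c • x) + v • ((Fintype.card G : ℤ) • x) := by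
        rw [add_smul, mul_smul, mul_smul]
    _ = 0 := by
        rw [hx, smul_zero, natCast_zsmul, card_nsmul_eq_zero, smul_zero, add_zero]
  intro a b hab
  have h0 : c • (a - b) = 0 := by
    simp only at hab
    rw [smul_sub, hab, sub_self]
  exact sub_eq_zero.mp (key _ h0)

/-- Orthogonality: summing all characters at a fixed point. -/
private lemma aux_ind (𝔇 : Multiplicative G ≃* AddChar G ℂ) (x : G) :
    ∑ g : G, 𝔇 (Multiplicative.ofAdd g) x
      = if x = 0 then (Fintype.card G : ℂ) else 0 := by
  rw [← AddChar.sum_apply_eq_ite]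
  exact Fintype.sum_equiv (Multiplicative.ofAdd.trans 𝔇.toEquiv) _ _ fun g => rfl

/-- A nontrivial character, precomposed with multiplication by a coprime integer, sums to zero. -/
private lemma aux_sum_zero (𝔇 : Multiplicative G ≃* AddChar G ℂ) {c : ℤ}
    (hc : IsCoprime c (Fintype.card G : ℤ)) {g : G} (hg : g ≠ 0) :
    ∑ x : G, 𝔇 (Multiplicative.ofAdd g) (c • x) = 0 := by
  have hre : ∑ x : G, 𝔇 (Multiplicative.ofAdd g) (c • x)
      = ∑ y : G, 𝔇 (Multiplicative.ofAdd g) y :=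
    Fintype.sum_bijective _ (aux_smul_bij hc) _ _ fun x => rfl
  have hne : 𝔇 (Multiplicative.ofAdd g) ≠ 0 := by
    intro h
    apply hg
    have : Multiplicative.ofAdd g = 1 := 𝔇.injective (by rw [map_one]; exact h)
    simpa using this
  classical
  rw [hre, AddChar.sum_eq_ite, if_neg hne]

/-- AddChar of a finite sum is the product. -/
private lemma aux_char_sum {ι : Type*} (ψ : AddChar G ℂ) (s : Finset ι) (v : ι → G) :
    ψ (∑ i ∈ s, v i) = ∏ i ∈ s, ψ (v i) := by
  induction s using Finset.cons_induction with
  | empty => simp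
  | cons a s ha ih => rw [Finset.sum_cons, Finset.prod_cons, AddChar.map_add_eq_mul, ih]

/-- The key Fourier identity for the configuration sum. -/
private lemma aux_key {d : ℕ} (𝔇 : Multiplicative G ≃* AddChar G ℂ)
    (L : Matrix (Fin 1) (Fin d) ℤ) (h : G → ℂ) :
    (∑ v ∈ config L, ∏ i, h (v i)) * (Fintype.card G : ℂ)
      = ∑ g : G, ∏ i, ∑ x : G, 𝔇 (Multiplicative.ofAdd g) (L 0 i • x) * h x := by
  have step1 : ∀ g : G,
      (∏ i, ∑ x : G, 𝔇 (Multiplicative.ofAdd g) (L 0 i • x) * h x)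
        = ∑ v : Fin d → G, ∏ i, (𝔇 (Multiplicative.ofAdd g) (L 0 i • v i) * h (v i)) := by
    intro g
    rw [Finset.prod_univ_sum]
    exact Finset.sum_congr (by simp) fun v _ => rfl
  simp only [step1]
  rw [Finset.sum_comm]
  have step2 : ∀ v : Fin d → G,
      (∑ g : G, ∏ i, (𝔇 (Multiplicative.ofAdd g) (L 0 i • v i) * h (v i)))
        = (if (∑ i, L 0 i • v i) = 0 then (Fintype.card G : ℂ) else 0) * ∏ i, h (v i) := by
    intro v
    rw [← aux_ind 𝔇, Finset.sum_mul]
    refine Finset.sum_congr rfl fun g _ => ?_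
    rw [Finset.prod_mul_distrib, ← aux_char_sum]
  simp only [step2]
  rw [config, Finset.sum_filter, mul_comm, Finset.mul_sum]
  refine Finset.sum_congr rfl fun v _ => ?_
  split_ifs <;> ring

/-- For odd `d` and `L ∈ ℤ^{1×d}` with all coefficients coprime to `|G|`, for every
`f : G → [0,1]` one has `t_L(f) + t_L(1−f) = E(f)^d + (1 − E(f))^d`. -/
theorem odd_double_density {d : ℕ} (L : Matrix (Fin 1) (Fin d) ℤ)
    (𝔇 : Multiplicative G ≃* AddChar G ℂ)
    (hd : Odd d)
    (hcop : ∀ i, IsCoprime (L 0 i) (Fintype.card G : ℤ))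
    (f : G → ℝ) (hf : ∀ x, f x ∈ Set.Icc (0 : ℝ) 1) :
    tL L f + tL L (fun x => 1 - f x) = (avg f) ^ d + (1 - avg f) ^ d := by
  classical
  set N : ℂ := (Fintype.card G : ℂ) with hNdef
  have hN : N ≠ 0 := Nat.cast_ne_zero.mpr Fintype.card_ne_zero
  set F : ℂ := ∑ x : G, (f x : ℂ) with hFdef
  have hchar0 : ∀ x : G, 𝔇 (Multiplicative.ofAdd (0 : G)) x = 1 := by
    intro x
    rw [show Multiplicative.ofAdd (0 : G) = 1 from rfl, map_one, AddChar.one_apply]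
  -- the main identity
  have main : ((∑ v ∈ config L, ∏ i, (f (v i) : ℂ))
        + (∑ v ∈ config L, ∏ i, ((1 : ℂ) - f (v i)))) * N
      = F ^ d + (N - F) ^ d := by
    rw [add_mul, aux_key 𝔇 L (fun x => (f x : ℂ)), aux_key 𝔇 L (fun x => 1 - (f x : ℂ)),
      ← Finset.sum_add_distrib]
    rw [Finset.sum_eq_single (0 : G)]
    · simp only [hchar0, one_mul]
      rw [Finset.prod_const, Finset.prod_const]
      have h1 : ∑ x : G, (f x : ℂ) = F := rfl
      have h2 : ∑ x : G, ((1 : ℂ) - f x) = N - F := by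
        rw [Finset.sum_sub_distrib, Finset.sum_const, card_univ, nsmul_eq_mul, mul_one]
      rw [h1, h2, card_univ, Fintype.card_fin]
    · intro g _ hg
      have hfac : ∀ i : Fin d,
          (∑ x : G, 𝔇 (Multiplicative.ofAdd g) (L 0 i • x) * ((1 : ℂ) - f x))
            = -(∑ x : G, 𝔇 (Multiplicative.ofAdd g) (L 0 i • x) * (f x : ℂ)) := by
        intro i
        have hz := aux_sum_zero 𝔇 (hcop i) hg
        have hsplit : (∑ x : G, 𝔇 (Multiplicative.ofAdd g) (L 0 i • x) * ((1 : ℂ) - f x))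
            = (∑ x : G, 𝔇 (Multiplicative.ofAdd g) (L 0 i • x))
              - ∑ x : G, 𝔇 (Multiplicative.ofAdd g) (L 0 i • x) * (f x : ℂ) := by
          rw [← Finset.sum_sub_distrib]
          exact Finset.sum_congr rfl fun x _ => by ring
        rw [hsplit, hz, zero_sub]
      simp only [hfac]
      have : (∏ i : Fin d, -(∑ x : G, 𝔇 (Multiplicative.ofAdd g) (L 0 i • x) * (f x : ℂ)))
          = (-1 : ℂ) ^ d * ∏ i : Fin d, ∑ x : G, 𝔇 (Multiplicative.ofAdd g) (L 0 i • x) * (f x : ℂ) := by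
        rw [show ((-1 : ℂ) ^ d) = ∏ _i : Fin d, (-1 : ℂ) by
            rw [Finset.prod_const, card_univ, Fintype.card_fin], ← Finset.prod_mul_distrib]
        exact Finset.prod_congr rfl fun i _ => (neg_one_mul _).symm
      rw [this, hd.neg_one_pow]
      ring
    · intro h; exact absurd (Finset.mem_univ 0) h
  -- the cardinality identity
  have hcard : ((config (G := G) L).card : ℂ) * N = N ^ d := by
    have h1 := aux_key 𝔇 L (fun _ => (1 : ℂ))
    simp only [mul_one] at h1
    rw [Finset.prod_const, Finset.card_univ] at h1
    rw [show ((config (G := G) L).card : ℂ) = ∑ v ∈ config L, (1:ℂ) ^ Fintype.card (Fin d) by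
      simp only [one_pow, Finset.sum_const, nsmul_eq_mul, mul_one]
      rfl, h1]
    rw [Finset.sum_eq_single (0 : G)]
    · simp only [hchar0]
      rw [Finset.prod_const, Finset.sum_const, card_univ, nsmul_eq_mul, mul_one, card_univ,
        Fintype.card_fin]
    · intro g _ hg
      have hne : (Finset.univ : Finset (Fin d)).Nonempty := by
        have : 0 < d := hd.pos
        exact ⟨⟨0, this⟩, Finset.mem_univ _⟩
      obtain ⟨i₀, _⟩ := hne
      refine Finset.prod_eq_zero (Finset.mem_univ i₀) ?_
      exact aux_sum_zero 𝔇 (hcop i₀) hg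
    · intro h; exact absurd (Finset.mem_univ 0) h
  have hC : ((config (G := G) L).card : ℂ) ≠ 0 := by
    intro h
    rw [h, zero_mul] at hcard
    exact (pow_ne_zero d hN) hcard.symm
  -- transfer to the reals
  apply Complex.ofReal_injective
  simp only [tL, avg]
  push_cast
  have hsum : (∑ v ∈ config L, ∏ i, (f (v i) : ℂ))
      + (∑ v ∈ config L, ∏ i, ((1 : ℂ) - f (v i)))
      = (F ^ d + (N - F) ^ d) / N := (eq_div_iff hN).mpr main
  rw [← add_div, hsum, div_div, mul_comm, hcard]
  rw [show (1 : ℂ) - F / N = (N - F) / N by field_simp]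
  rw [div_pow, div_pow, ← add_div]
end
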